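/- arXiv:2509.26559 — 8 statements merged into one kernel-verified Lean document; each statement's English description precedes it below -/
import Mathlib

section
/- Let n be a positive integer and let k be an integer such that k-1 is a prime number. If for every nonnegative integer r and every choice of sign, whenever n - 1 - (3r^2 ± r)/2 ≥ 0 one has n - 1 - (3r^2 ± r)/2 ≢ 0 (mod k-1), then τ_k(n) ≡ 0 (mod k-1). -/
open PowerSeries Finset


namespace Franklin
open Finset

/-- largest element (0 for ∅). -/
def mx (S : Finset ℕ) : ℕ := S.sup id
/-- smallest element (0 for ∅). -/
def mn (S : Finset ℕ) : ℕ := WithTop.untopD 0 S.min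
/-- length of the maximal "staircase" at the top. -/
def stair (S : Finset ℕ) : ℕ :=
  Nat.findGreatest (fun j => Finset.Icc (mx S + 1 - j) (mx S) ⊆ S) S.card

def moveA (S : Finset ℕ) : Finset ℕ :=
  (S \ insert (mn S) (Finset.Icc (mx S + 1 - mn S) (mx S))) ∪
    Finset.Icc (mx S + 2 - mn S) (mx S + 1)

def moveB (S : Finset ℕ) : Finset ℕ :=
  (S \ Finset.Icc (mx S + 1 - stair S) (mx S)) ∪
    insert (stair S) (Finset.Icc (mx S - stair S) (mx S - 1))

def g (S : Finset ℕ) : Finset ℕ := if mn S ≤ stair S then moveA S else moveB S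

variable {S : Finset ℕ}

lemma le_mx {x : ℕ} (hx : x ∈ S) : x ≤ mx S := Finset.le_sup (f := id) hx

lemma mx_mem (hne : S.Nonempty) : mx S ∈ S := by
  obtain ⟨b, hb, h⟩ := Finset.exists_mem_eq_sup S hne id
  rw [mx, h]; exact hb

lemma mn_eq (hne : S.Nonempty) : mn S = S.min' hne := by
  rw [mn, ← Finset.coe_min' hne]; rfl

lemma mn_mem (hne : S.Nonempty) : mn S ∈ S := by rw [mn_eq hne]; exact S.min'_mem hne

lemma mn_le {x : ℕ} (hx : x ∈ S) : mn S ≤ x := by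
  rw [mn_eq ⟨x, hx⟩]; exact S.min'_le x hx

lemma card_le_mx (h0 : 0 ∉ S) : S.card ≤ mx S := by
  have hsub : S ⊆ Finset.Icc 1 (mx S) := by
    intro x hx
    simp only [mem_Icc]
    exact ⟨Nat.one_le_iff_ne_zero.2 (by rintro rfl; exact h0 hx), le_mx hx⟩
  simpa [Nat.card_Icc] using Finset.card_le_card hsub

lemma stair_le_card : stair S ≤ S.card := Nat.findGreatest_le _

lemma stair_spec : Finset.Icc (mx S + 1 - stair S) (mx S) ⊆ S := by
  have h0 : Finset.Icc (mx S + 1 - 0) (mx S) ⊆ S := by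
    rw [Nat.sub_zero, Finset.Icc_eq_empty (by omega)]
    exact empty_subset _
  exact Nat.findGreatest_spec (P := fun j => Finset.Icc (mx S + 1 - j) (mx S) ⊆ S)
    (Nat.zero_le S.card) h0

lemma le_stair {j : ℕ} (h1 : j ≤ S.card) (h2 : Finset.Icc (mx S + 1 - j) (mx S) ⊆ S) :
    j ≤ stair S := by
  unfold stair
  exact Nat.le_findGreatest h1 h2

lemma stair_is_greatest {j : ℕ} (h1 : stair S < j) (h2 : j ≤ S.card) :
    ¬ (Finset.Icc (mx S + 1 - j) (mx S) ⊆ S) :=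
  Nat.findGreatest_is_greatest h1 h2

lemma one_le_stair (hne : S.Nonempty) : 1 ≤ stair S := by
  apply le_stair (Finset.card_pos.2 hne)
  rw [Nat.add_sub_cancel, Finset.Icc_self, Finset.singleton_subset_iff]
  exact mx_mem hne

lemma mx_sub_stair_not_mem (h0 : 0 ∉ S) (hne : S.Nonempty) : mx S - stair S ∉ S := by
  intro hmem
  have hσM : stair S ≤ mx S := le_trans stair_le_card (card_le_mx h0)
  have key : Finset.Icc (mx S - stair S) (mx S) ⊆ S := by
    intro x hx
    rw [mem_Icc] at hx
    rcases eq_or_lt_of_le hx.1 with h | h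
    · exact h ▸ hmem
    · exact stair_spec (mem_Icc.2 ⟨by omega, hx.2⟩)
  have hcard : stair S + 1 ≤ S.card := by
    have := Finset.card_le_card key
    rwa [Nat.card_Icc, show mx S + 1 - (mx S - stair S) = stair S + 1 by omega] at this
  apply stair_is_greatest (by omega) hcard
  rwa [show mx S + 1 - (stair S + 1) = mx S - stair S by omega]

lemma sum_Icc_shift (a b : ℕ) :
    ∑ x ∈ Finset.Icc (a + 1) (b + 1), x = (∑ x ∈ Finset.Icc a b, x) + (Finset.Icc a b).card := by
  rw [← Finset.image_add_right_Icc a b 1, Finset.sum_image (fun x _ y _ h => by simpa using h)]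
  rw [Finset.sum_add_distrib, Finset.sum_const, smul_eq_mul, mul_one]

lemma sum_Icc_id_mul_two (a b : ℕ) :
    (∑ x ∈ Finset.Icc a b, x) * 2 = (a + b) * (b + 1 - a) := by
  induction b with
  | zero =>
    rcases Nat.eq_zero_or_pos a with rfl | ha
    · simp
    · rw [Finset.Icc_eq_empty (by omega)]; simp; omega
  | succ b ih =>
    rcases le_or_gt a (b + 1) with hab | hab
    · rw [← Finset.Ico_add_one_right_eq_Icc, Finset.sum_Ico_succ_top hab, Finset.Ico_add_one_right_eq_Icc]
      rcases le_or_gt a b with hab' | hab'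
      · zify [hab, hab', show a ≤ b + 2 by omega] at ih ⊢
        linear_combination ih
      · have : a = b + 1 := by omega
        subst this
        rw [Finset.Icc_eq_empty (by omega)]
        simp
        ring
    · rw [Finset.Icc_eq_empty (by omega), show b + 1 + 1 - a = 0 by omega]
      simp

lemma caseA (h0 : 0 ∉ S) (hne : S.Nonempty) (hA : mn S ≤ stair S) (hc : mn S < S.card) :
    0 ∉ moveA S ∧ (moveA S).sum id = S.sum id ∧ (moveA S).card + 1 = S.card ∧
      g (moveA S) = S := by
  have hs1 : 1 ≤ mn S := Nat.one_le_iff_ne_zero.2 (by rintro h; exact h0 (h ▸ mn_mem hne))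
  have hsM : mn S ≤ mx S := le_mx (mn_mem hne)
  have hσM : stair S ≤ mx S := le_trans stair_le_card (card_le_mx h0)
  have hSsub : S ⊆ Finset.Icc (mn S) (mx S) := fun x hx => mem_Icc.2 ⟨mn_le hx, le_mx hx⟩
  have h2s : 2 * mn S ≤ mx S := by
    have := Finset.card_le_card hSsub
    rw [Nat.card_Icc] at this
    omega
  have hIsub : Finset.Icc (mx S + 1 - mn S) (mx S) ⊆ S :=
    subset_trans (Finset.Icc_subset_Icc (by omega) le_rfl) stair_spec
  have hsI : mn S ∉ Finset.Icc (mx S + 1 - mn S) (mx S) := by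
    rw [mem_Icc]; omega
  have hins : insert (mn S) (Finset.Icc (mx S + 1 - mn S) (mx S)) ⊆ S :=
    Finset.insert_subset (mn_mem hne) hIsub
  -- abbreviations
  set s := mn S with hs
  set M := mx S with hM
  set D := S \ insert s (Finset.Icc (M + 1 - s) M) with hD
  set I' := Finset.Icc (M + 2 - s) (M + 1) with hI'
  have hTA : moveA S = D ∪ I' := rfl
  have hmemD : ∀ x ∈ D, x ∈ S ∧ s + 1 ≤ x ∧ x ≤ M := by
    intro x hx
    rw [hD, mem_sdiff, mem_insert, mem_Icc] at hx
    have h1 := mn_le hx.1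
    have h2 := le_mx hx.1
    exact ⟨hx.1, by omega, h2⟩
  have hdisj : Disjoint D I' := by
    rw [Finset.disjoint_left]
    intro x hxD hxI'
    rw [hI', mem_Icc] at hxI'
    have := hmemD x hxD
    rw [hD, mem_sdiff, mem_insert, mem_Icc] at hxD
    omega
  have hlb : ∀ x ∈ moveA S, s + 1 ≤ x := by
    intro x hx
    rw [hTA, mem_union] at hx
    rcases hx with hx | hx
    · exact (hmemD x hx).2.1
    · rw [hI', mem_Icc] at hx; omega
  have hub : ∀ x ∈ moveA S, x ≤ M + 1 := by
    intro x hx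
    rw [hTA, mem_union] at hx
    rcases hx with hx | hx
    · exact le_trans (hmemD x hx).2.2 (by omega)
    · rw [hI', mem_Icc] at hx; omega
  have hM1T : M + 1 ∈ moveA S := by
    rw [hTA, mem_union, hI', mem_Icc]; right; omega
  have hneT : (moveA S).Nonempty := ⟨M + 1, hM1T⟩
  have h0T : 0 ∉ moveA S := fun h => by have := hlb 0 h; omega
  have hmxT : mx (moveA S) = M + 1 :=
    le_antisymm (Finset.sup_le fun x hx => hub x hx) (le_mx hM1T)
  have hmnT : s + 1 ≤ mn (moveA S) := hlb _ (mn_mem hneT)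
  have hcardIcc : (Finset.Icc (M + 1 - s) M).card = s := by rw [Nat.card_Icc]; omega
  have hcardI' : I'.card = s := by rw [hI', Nat.card_Icc]; omega
  have hcardT : (moveA S).card + 1 = S.card := by
    have h1 : (moveA S).card = D.card + I'.card := by rw [hTA]; exact card_union_of_disjoint hdisj
    have h2 : D.card + (insert s (Finset.Icc (M + 1 - s) M)).card = S.card := by
      rw [hD]; exact Finset.card_sdiff_add_card_eq_card hins
    rw [Finset.card_insert_of_notMem hsI, hcardIcc] at h2
    omega
  have hsumT : (moveA S).sum id = S.sum id := by
    have h1 : (moveA S).sum id = D.sum id + I'.sum id := by rw [hTA]; exact Finset.sum_union hdisj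
    have h2 : D.sum id + (insert s (Finset.Icc (M + 1 - s) M)).sum id = S.sum id := by
      rw [hD]; exact Finset.sum_sdiff hins
    have h2' : (insert s (Finset.Icc (M + 1 - s) M)).sum id = s + (Finset.Icc (M + 1 - s) M).sum id := by
      simp [Finset.sum_insert hsI]
    have h3 : I'.sum id = (Finset.Icc (M + 1 - s) M).sum id + s := by
      rw [hI', show M + 2 - s = (M + 1 - s) + 1 by omega, show M + 1 = M + 1 from rfl]
      have := sum_Icc_shift (M + 1 - s) M
      simpa [hcardIcc] using this
    omega
  have hstairT : stair (moveA S) = s := by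
    have hge : s ≤ stair (moveA S) := by
      apply le_stair (by omega)
      rw [hmxT]
      rw [show M + 1 + 1 - s = M + 2 - s by omega]
      rw [hTA]
      exact subset_union_right
    rcases eq_or_lt_of_le hge with h | h
    · omega
    · exfalso
      have hsp : Finset.Icc (mx (moveA S) + 1 - stair (moveA S)) (mx (moveA S)) ⊆ moveA S :=
        stair_spec
      rw [hmxT] at hsp
      have hmem : M + 1 - s ∈ Finset.Icc (M + 1 + 1 - stair (moveA S)) (M + 1) := by
        rw [mem_Icc]; omega
      have := hsp hmem
      rw [hTA, mem_union] at this
      rcases this with hcon | hcon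
      · rw [hD, mem_sdiff, mem_insert, mem_Icc] at hcon
        omega
      · rw [hI', mem_Icc] at hcon; omega
  have hgT : g (moveA S) = S := by
    rw [g, if_neg (by omega)]
    unfold moveB
    rw [hmxT, hstairT]
    rw [show M + 1 + 1 - s = M + 2 - s by omega, show M + 1 - s = M + 1 - s from rfl,
      Nat.add_sub_cancel]
    rw [← hI']
    have hTdiff : (D ∪ I') \ I' = D := by
      ext x
      simp only [mem_sdiff, mem_union]
      constructor
      · rintro ⟨h1 | h1, h2⟩
        · exact h1
        · exact absurd h1 h2
      · intro hx
        exact ⟨Or.inl hx, Finset.disjoint_left.1 hdisj hx⟩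
    rw [hTA, hTdiff, hD]
    exact Finset.sdiff_union_of_subset hins
  exact ⟨h0T, hsumT, hcardT, hgT⟩

lemma caseB (h0 : 0 ∉ S) (hne : S.Nonempty) (hB : stair S < mn S) (hM : 2 * stair S < mx S) :
    0 ∉ moveB S ∧ (moveB S).sum id = S.sum id ∧ (moveB S).card = S.card + 1 ∧
      g (moveB S) = S := by
  have hs1 : 1 ≤ mn S := Nat.one_le_iff_ne_zero.2 (by rintro h; exact h0 (h ▸ mn_mem hne))
  have hσ1 : 1 ≤ stair S := one_le_stair hne
  have hsM : mn S ≤ mx S := le_mx (mn_mem hne)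
  have hσc : stair S ≤ S.card := stair_le_card
  have hσM : stair S ≤ mx S := le_trans stair_le_card (card_le_mx h0)
  have hnot : mx S - stair S ∉ S := mx_sub_stair_not_mem h0 hne
  set σ := stair S with hσ
  set M := mx S with hMd
  set s := mn S with hsd
  have hJsub : Finset.Icc (M + 1 - σ) M ⊆ S := stair_spec
  set J := Finset.Icc (M + 1 - σ) M with hJ
  set K := Finset.Icc (M - σ) (M - 1) with hK
  set D := S \ J with hD
  have hTB : moveB S = D ∪ insert σ K := rfl
  have hmemD : ∀ x ∈ D, x ∈ S ∧ s ≤ x ∧ x + 1 ≤ M - σ := by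
    intro x hx
    rw [hD, mem_sdiff, hJ, mem_Icc] at hx
    have h1 := mn_le hx.1
    have h2 := le_mx hx.1
    have h3 : x ≠ M - σ := fun h => hnot (h ▸ hx.1)
    exact ⟨hx.1, h1, by omega⟩
  have hσK : σ ∉ K := by rw [hK, mem_Icc]; omega
  have hdisj : Disjoint D (insert σ K) := by
    rw [Finset.disjoint_left]
    intro x hxD hxK
    have := hmemD x hxD
    rw [mem_insert, hK, mem_Icc] at hxK
    omega
  have hbound : ∀ x ∈ moveB S, σ ≤ x ∧ x ≤ M - 1 := by
    intro x hx
    rw [hTB, mem_union, mem_insert, hK, mem_Icc] at hx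
    rcases hx with hx | hx
    · have := hmemD x hx; omega
    · omega
  have h0T : 0 ∉ moveB S := fun h => by have := hbound 0 h; omega
  have hσT : σ ∈ moveB S := by rw [hTB, mem_union, mem_insert]; right; left; rfl
  have hM1T : M - 1 ∈ moveB S := by
    rw [hTB, mem_union, mem_insert, hK, mem_Icc]; right; right; omega
  have hneT : (moveB S).Nonempty := ⟨σ, hσT⟩
  have hmxT : mx (moveB S) = M - 1 :=
    le_antisymm (Finset.sup_le fun x hx => (hbound x hx).2) (le_mx hM1T)
  have hmnT : mn (moveB S) = σ :=
    le_antisymm (mn_le hσT) ((hbound _ (mn_mem hneT)).1)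
  have hcardJ : J.card = σ := by rw [hJ, Nat.card_Icc]; omega
  have hcardK : K.card = σ := by rw [hK, Nat.card_Icc]; omega
  have hcardS : D.card + σ = S.card := by
    have := Finset.card_sdiff_add_card_eq_card hJsub
    rw [hcardJ] at this
    exact this
  have hcardT : (moveB S).card = S.card + 1 := by
    rw [hTB, card_union_of_disjoint hdisj, Finset.card_insert_of_notMem hσK, hcardK]
    omega
  have hsumJ : J.sum id = K.sum id + σ := by
    have h1 : J = Finset.Icc ((M - σ) + 1) ((M - 1) + 1) := by
      rw [hJ]; congr 1 <;> omega
    have := sum_Icc_shift (M - σ) (M - 1)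
    rw [h1]
    simpa [hK, hcardK, show M - 1 + 1 - (M - σ) = σ by omega] using this
  have hsumT : (moveB S).sum id = S.sum id := by
    have h1 : (moveB S).sum id = D.sum id + (insert σ K).sum id := by
      rw [hTB]; exact Finset.sum_union hdisj
    have h2 : (insert σ K).sum id = σ + K.sum id := by simp [Finset.sum_insert hσK]
    have h3 : D.sum id + J.sum id = S.sum id := Finset.sum_sdiff hJsub
    omega
  have hstairT : σ ≤ stair (moveB S) := by
    apply le_stair (by omega)
    rw [hmxT, show M - 1 + 1 - σ = M - σ by omega]
    rw [hTB]
    exact subset_trans (by rw [hK]) (subset_trans (Finset.subset_insert σ K) subset_union_right)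
  have hgT : g (moveB S) = S := by
    rw [g, if_pos (by omega)]
    unfold moveA
    rw [hmxT, hmnT]
    rw [show M - 1 + 1 - σ = M - σ by omega, show M - 1 + 2 - σ = M + 1 - σ by omega,
      show M - 1 + 1 = M by omega]
    have hTdiff : (D ∪ insert σ K) \ insert σ K = D := by
      ext x
      simp only [mem_sdiff, mem_union]
      constructor
      · rintro ⟨h1 | h1, h2⟩
        · exact h1
        · exact absurd h1 h2
      · intro hx
        exact ⟨Or.inl hx, Finset.disjoint_left.1 hdisj hx⟩
    rw [hTB, hTdiff, hD, ← hJ]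
    exact Finset.sdiff_union_of_subset hJsub
  exact ⟨h0T, hsumT, hcardT, hgT⟩

lemma pentm (s : ℕ) (hs : 1 ≤ s) : (3 * s - 1) * s = 3 * s ^ 2 - s := by
  have h1 : 1 ≤ 3 * s := by omega
  have h2 : s ≤ 3 * s ^ 2 := by nlinarith
  zify [h1, h2]
  ring

lemma exceptA (h0 : 0 ∉ S) (hne : S.Nonempty) (hA : mn S ≤ stair S) (hc : S.card ≤ mn S) :
    S.sum id * 2 = 3 * mn S ^ 2 - mn S := by
  have hs1 : 1 ≤ mn S := Nat.one_le_iff_ne_zero.2 (by rintro h; exact h0 (h ▸ mn_mem hne))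
  have hsM : mn S ≤ mx S := le_mx (mn_mem hne)
  have hσc : stair S ≤ S.card := stair_le_card
  have hIsub : Finset.Icc (mx S + 1 - mn S) (mx S) ⊆ S :=
    subset_trans (Finset.Icc_subset_Icc (by omega) le_rfl) stair_spec
  have hcardI : (Finset.Icc (mx S + 1 - mn S) (mx S)).card = mn S := by
    rw [Nat.card_Icc]; omega
  have hSeq : S = Finset.Icc (mx S + 1 - mn S) (mx S) :=
    (Finset.eq_of_subset_of_card_le hIsub (by omega)).symm
  have hlow : mx S + 1 - mn S ∈ S := hIsub (mem_Icc.2 ⟨le_rfl, by omega⟩)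
  have h1 := mn_le hlow
  have h2 : mx S + 1 - mn S ≤ mn S := by
    have hmem : mn S ∈ Finset.Icc (mx S + 1 - mn S) (mx S) := by
      rw [← hSeq]; exact mn_mem hne
    exact (mem_Icc.1 hmem).1
  have hM2 : mx S + 1 = 2 * mn S := by omega
  have key : S.sum id * 2 = (Finset.Icc (mx S + 1 - mn S) (mx S)).sum id * 2 := by rw [← hSeq]
  rw [key, show (Finset.Icc (mx S + 1 - mn S) (mx S)).sum id
      = ∑ x ∈ Finset.Icc (mx S + 1 - mn S) (mx S), x from rfl, sum_Icc_id_mul_two,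
    show mx S + 1 - mn S + mx S = 3 * mn S - 1 by omega,
    show mx S + 1 - (mx S + 1 - mn S) = mn S by omega]
  exact pentm (mn S) hs1

lemma exceptB (h0 : 0 ∉ S) (hne : S.Nonempty) (hB : stair S < mn S) (hM : mx S ≤ 2 * stair S) :
    S.sum id * 2 = 3 * stair S ^ 2 + stair S := by
  have hs1 : 1 ≤ mn S := Nat.one_le_iff_ne_zero.2 (by rintro h; exact h0 (h ▸ mn_mem hne))
  have hσ1 : 1 ≤ stair S := one_le_stair hne
  have hsM : mn S ≤ mx S := le_mx (mn_mem hne)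
  have hσM : stair S ≤ mx S := le_trans stair_le_card (card_le_mx h0)
  have hnot : mx S - stair S ∉ S := mx_sub_stair_not_mem h0 hne
  have hSeq : S = Finset.Icc (mx S + 1 - stair S) (mx S) := by
    apply Finset.Subset.antisymm
    · intro x hx
      rw [mem_Icc]
      have h1 := mn_le hx
      have h2 := le_mx hx
      have h3 : x ≠ mx S - stair S := fun h => hnot (h ▸ hx)
      constructor
      · by_contra hcon
        omega
      · exact h2
    · exact stair_spec
  have hlow : mx S + 1 - stair S ∈ S := stair_spec (mem_Icc.2 ⟨le_rfl, by omega⟩)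
  have h1 := mn_le hlow
  have h2 : mx S + 1 - stair S ≤ mn S := by
    have hmem : mn S ∈ Finset.Icc (mx S + 1 - stair S) (mx S) := by
      rw [← hSeq]; exact mn_mem hne
    exact (mem_Icc.1 hmem).1
  have hM2 : mx S = 2 * stair S := by omega
  have key : S.sum id * 2 = (Finset.Icc (mx S + 1 - stair S) (mx S)).sum id * 2 := by
    rw [← hSeq]
  rw [key, show (Finset.Icc (mx S + 1 - stair S) (mx S)).sum id
      = ∑ x ∈ Finset.Icc (mx S + 1 - stair S) (mx S), x from rfl, sum_Icc_id_mul_two,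
    show mx S + 1 - stair S + mx S = 3 * stair S + 1 by omega,
    show mx S + 1 - (mx S + 1 - stair S) = stair S by omega]
  ring

lemma g_spec (h0 : 0 ∉ S) (hne : S.Nonempty)
    (h1 : ∀ r : ℕ, S.sum id * 2 ≠ 3 * r ^ 2 + r)
    (h2 : ∀ r : ℕ, S.sum id * 2 ≠ 3 * r ^ 2 - r) :
    0 ∉ g S ∧ (g S).sum id = S.sum id ∧
      ((g S).card = S.card + 1 ∨ (g S).card + 1 = S.card) ∧ g (g S) = S := by
  by_cases hA : mn S ≤ stair S
  · have hc : mn S < S.card := by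
      by_contra hc'
      exact h2 (mn S) (exceptA h0 hne hA (by omega))
    have hg : g S = moveA S := by rw [g, if_pos hA]
    obtain ⟨c0, c1, c2, c3⟩ := caseA h0 hne hA hc
    rw [hg]
    exact ⟨c0, c1, Or.inr c2, c3⟩
  · push_neg at hA
    have hM : 2 * stair S < mx S := by
      by_contra hM'
      exact h1 (stair S) (exceptB h0 hne hA (by omega))
    have hg : g S = moveB S := by rw [g, if_neg (by omega)]
    obtain ⟨c0, c1, c2, c3⟩ := caseB h0 hne hA hM
    rw [hg]
    exact ⟨c0, c1, Or.inl c2, c3⟩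

lemma franklin (n d : ℕ) (hdn : d ≤ n)
    (h1 : ∀ r : ℕ, d * 2 ≠ 3 * r ^ 2 + r) (h2 : ∀ r : ℕ, d * 2 ≠ 3 * r ^ 2 - r) :
    ∑ S ∈ (Finset.Icc 1 n).powerset.filter (fun S => S.sum id = d),
      (-1 : ℤ) ^ S.card = 0 := by
  have key : ∀ S ∈ (Finset.Icc 1 n).powerset.filter (fun S => S.sum id = d),
      0 ∉ g S ∧ (g S).sum id = S.sum id ∧
        ((g S).card = S.card + 1 ∨ (g S).card + 1 = S.card) ∧ g (g S) = S ∧ S.sum id = d := by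
    intro S hS
    rw [Finset.mem_filter, Finset.mem_powerset] at hS
    obtain ⟨hsub, hsum⟩ := hS
    have h0 : 0 ∉ S := fun h => by simpa using hsub h
    have hne : S.Nonempty := by
      rcases S.eq_empty_or_nonempty with rfl | h
      · exfalso
        apply h1 0
        simp at hsum
        simp [← hsum]
      · exact h
    obtain ⟨a, b, c, e⟩ := g_spec h0 hne (fun r => by rw [hsum]; exact h1 r)
      (fun r => by rw [hsum]; exact h2 r)
    exact ⟨a, b, c, e, hsum⟩
  refine Finset.sum_involution (fun S _ => g S) ?_ ?_ ?_ ?_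
  · intro S hS
    obtain ⟨_, _, hcard, _, _⟩ := key S hS
    rcases hcard with h | h
    · rw [h, pow_succ]; ring
    · rw [← h, pow_succ]; ring
  · intro S hS _ hEq
    have hEq' : g S = S := hEq
    have := (key S hS).2.2.1
    rw [hEq'] at this
    omega
  · intro S hS
    obtain ⟨h0g, hsumg, _, _, hsum⟩ := key S hS
    rw [Finset.mem_filter, Finset.mem_powerset]
    constructor
    · intro x hx
      rw [mem_Icc]
      refine ⟨Nat.one_le_iff_ne_zero.2 (by rintro rfl; exact h0g hx), ?_⟩
      calc x = id x := rfl
        _ ≤ (g S).sum id := Finset.single_le_sum (fun i _ => Nat.zero_le (id i)) hx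
        _ = d := by rw [hsumg, hsum]
        _ ≤ n := hdn
    · rw [hsumg, hsum]
  · intro S hS
    exact (key S hS).2.2.2.1

end Franklin

section PS

lemma isUnit_one_sub_X_pow' {R : Type*} [CommRing R] {j : ℕ} (hj : j ≠ 0) :
    IsUnit ((1 : PowerSeries R) - (PowerSeries.X : PowerSeries R) ^ j) := by
  rw [PowerSeries.isUnit_iff_constantCoeff]
  simp [zero_pow hj]

/-- support contained in multiples of `p`. -/
def QQ (R : Type*) [Semiring R] (p : ℕ) (F : PowerSeries R) : Prop :=
  ∀ i : ℕ, ¬ p ∣ i → PowerSeries.coeff (R := R) i F = 0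

lemma QQ_one (R : Type*) [Semiring R] (p : ℕ) : QQ R p 1 := by
  intro i hi
  have h0 : i ≠ 0 := fun h => hi (h ▸ dvd_zero p)
  simp [PowerSeries.coeff_one, h0]

lemma QQ_mul {R : Type*} [Semiring R] {p : ℕ} {F G : PowerSeries R}
    (hF : QQ R p F) (hG : QQ R p G) : QQ R p (F * G) := by
  intro i hi
  rw [PowerSeries.coeff_mul]
  apply Finset.sum_eq_zero
  rintro ⟨a, b⟩ hab
  rw [Finset.HasAntidiagonal.mem_antidiagonal] at hab
  by_cases hpa : p ∣ a
  · have hpb : ¬ p ∣ b := fun hb => hi (hab ▸ dvd_add hpa hb)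
    rw [hG b hpb, mul_zero]
  · rw [hF a hpa, zero_mul]

lemma QQ_one_sub_X_pow {R : Type*} [CommRing R] {p t : ℕ} (ht : p ∣ t) :
    QQ R p (1 - PowerSeries.X ^ t) := by
  intro i hi
  have h0 : i ≠ 0 := fun h => hi (h ▸ dvd_zero p)
  have h1 : i ≠ t := fun h => hi (h ▸ ht)
  simp [PowerSeries.coeff_one, PowerSeries.coeff_X_pow, h0, h1]

lemma QQ_prod {R : Type*} [CommRing R] {p : ℕ} {ι : Type*} (s : Finset ι)
    (f : ι → PowerSeries R) (hf : ∀ m ∈ s, QQ R p (f m)) : QQ R p (∏ m ∈ s, f m) :=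
  Finset.prod_induction f (QQ R p) (fun _ _ => QQ_mul) (QQ_one R p) hf

lemma QQ_inv {R : Type*} [CommRing R] {p : ℕ} {F H : PowerSeries R}
    (hF : QQ R p F) (hFH : F * H = 1) : QQ R p H := by
  intro i
  induction i using Nat.strong_induction_on with
  | _ i ih =>
    intro hi
    have h0 : i ≠ 0 := fun h => hi (h ▸ dvd_zero p)
    have hc := congrArg (PowerSeries.coeff (R := R) i) hFH
    rw [PowerSeries.coeff_mul, PowerSeries.coeff_one, if_neg h0] at hc
    rw [Finset.Nat.sum_antidiagonal_eq_sum_range_succ_mk] at hc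
    rw [Finset.sum_range_succ'] at hc
    simp only [Nat.sub_zero] at hc
    have hz : ∀ a ∈ Finset.range i,
        PowerSeries.coeff (R := R) (a + 1) F * PowerSeries.coeff (R := R) (i - (a + 1)) H = 0 := by
      intro a ha
      rw [Finset.mem_range] at ha
      by_cases hpa : p ∣ (a + 1)
      · have hb : ¬ p ∣ (i - (a + 1)) := by
          intro hd
          apply hi
          have he : a + 1 + (i - (a + 1)) = i := by omega
          exact he ▸ dvd_add hpa hd
        rw [ih _ (by omega) hb, mul_zero]
      · rw [hF _ hpa, zero_mul]
    rw [Finset.sum_eq_zero hz, zero_add] at hc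
    have hu := congrArg (PowerSeries.constantCoeff (R := R)) hFH
    rw [map_mul, map_one] at hu
    rw [← PowerSeries.coeff_zero_eq_constantCoeff_apply,
      ← PowerSeries.coeff_zero_eq_constantCoeff_apply] at hu
    linear_combination (PowerSeries.coeff (R := R) 0 H) * hc - (PowerSeries.coeff (R := R) i H) * hu

theorem franklin' (n d : ℕ) (hdn : d ≤ n)
    (h1 : ∀ r : ℕ, d * 2 ≠ 3 * r ^ 2 + r) (h2 : ∀ r : ℕ, d * 2 ≠ 3 * r ^ 2 - r) :
    ∑ S ∈ (Finset.Icc 1 n).powerset.filter (fun S => S.sum id = d),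
      (-1 : ℤ) ^ S.card = 0 :=
  Franklin.franklin n d hdn h1 h2

lemma coeff_P_eq_zero {R : Type*} [CommRing R] {n a : ℕ} (ha : a ≤ n)
    (h1 : ∀ r : ℕ, a * 2 ≠ 3 * r ^ 2 + r) (h2 : ∀ r : ℕ, a * 2 ≠ 3 * r ^ 2 - r) :
    PowerSeries.coeff (R := R) a
      (∏ m ∈ Finset.range n, (1 - PowerSeries.X ^ (m + 1) : PowerSeries R)) = 0 := by
  classical
  have himg : Finset.Icc 1 n = (Finset.range n).image (· + 1) := by
    ext x
    constructor
    · intro hx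
      rw [Finset.mem_Icc] at hx
      refine Finset.mem_image.2 ⟨x - 1, Finset.mem_range.2 (by omega), ?_⟩
      show x - 1 + 1 = x
      omega
    · intro hx
      obtain ⟨y, hy, hyx⟩ := Finset.mem_image.1 hx
      rw [Finset.mem_range] at hy
      have hyx' : y + 1 = x := hyx
      rw [Finset.mem_Icc]
      omega
  have hP : (∏ m ∈ Finset.range n, (1 - PowerSeries.X ^ (m + 1) : PowerSeries R))
      = ∏ j ∈ Finset.Icc 1 n, (1 - PowerSeries.X ^ j : PowerSeries R) := by
    rw [himg, Finset.prod_image (fun x _ y _ h => by simpa using h)]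
  rw [hP]
  simp only [sub_eq_neg_add]
  rw [Finset.prod_add]
  simp only [Finset.prod_const_one, mul_one]
  rw [map_sum]
  have hterm : ∀ t : Finset ℕ, (∏ j ∈ t, (-(PowerSeries.X ^ j)) : PowerSeries R)
      = PowerSeries.C (R := R) ((-1) ^ t.card) * PowerSeries.X ^ (∑ j ∈ t, j) := by
    intro t
    calc (∏ j ∈ t, (-(PowerSeries.X ^ j)) : PowerSeries R)
        = ∏ j ∈ t, (PowerSeries.C (R := R) (-1) * PowerSeries.X ^ j) :=
          Finset.prod_congr rfl (fun j _ => by rw [map_neg, map_one, neg_one_mul])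
      _ = (∏ _j ∈ t, PowerSeries.C (R := R) (-1)) * ∏ j ∈ t, PowerSeries.X ^ j :=
          Finset.prod_mul_distrib
      _ = PowerSeries.C (R := R) ((-1) ^ t.card) * PowerSeries.X ^ (∑ j ∈ t, j) := by
          rw [Finset.prod_const, ← map_pow, Finset.prod_pow_eq_pow_sum]
  have step : ∀ t ∈ (Finset.Icc 1 n).powerset,
      PowerSeries.coeff (R := R) a (∏ j ∈ t, (-(PowerSeries.X ^ j)) : PowerSeries R)
        = if (∑ j ∈ t, j) = a then ((-1 : R)) ^ t.card else 0 := by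
    intro t _
    rw [hterm t, PowerSeries.coeff_C_mul, PowerSeries.coeff_X_pow]
    by_cases hta : a = ∑ j ∈ t, j
    · rw [if_pos hta, if_pos hta.symm, mul_one]
    · rw [if_neg hta, if_neg (Ne.symm hta), mul_zero]
  calc (∑ t ∈ (Finset.Icc 1 n).powerset,
        PowerSeries.coeff (R := R) a (∏ j ∈ t, (-(PowerSeries.X ^ j)) : PowerSeries R))
      = ∑ t ∈ (Finset.Icc 1 n).powerset,
          (if (∑ j ∈ t, j) = a then ((-1 : R)) ^ t.card else 0) :=
        Finset.sum_congr rfl step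
    _ = ∑ t ∈ (Finset.Icc 1 n).powerset.filter (fun t => (∑ j ∈ t, j) = a),
          ((-1 : R)) ^ t.card := (Finset.sum_filter _ _).symm
    _ = ∑ t ∈ (Finset.Icc 1 n).powerset.filter (fun t => t.sum id = a),
          ((-1 : R)) ^ t.card := by
        apply Finset.sum_congr _ (fun _ _ => rfl)
        apply Finset.filter_congr
        intro t _
        exact Iff.rfl
    _ = (((∑ t ∈ (Finset.Icc 1 n).powerset.filter (fun t => t.sum id = a),
          ((-1 : ℤ)) ^ t.card) : ℤ) : R) := by push_cast; rfl
    _ = 0 := by rw [franklin' n a ha h1 h2, Int.cast_zero]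

end PS



/-- `1 - X^(m+1)` is a unit in `ℤ⟦X⟧`. -/
lemma isUnit_one_sub_X_pow (m : ℕ) :
    IsUnit ((1 : PowerSeries ℤ) - (PowerSeries.X : PowerSeries ℤ) ^ (m + 1)) := by
  rw [PowerSeries.isUnit_iff_constantCoeff]
  simp

/-- `tau k n` is the coefficient of `q^n` in `q·∏_{m=1}^∞ (1-q^m)^k` (`k : ℤ`).  Since each
factor `(1-q^m)^(±|k|)` is `1 + (terms of degree ≥ m)`, the coefficient of `q^(n-1)` in the
infinite product agrees with that of the finite product `∏_{m=1}^{n} (1-q^m)^k`, computed in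
the unit group of `ℤ⟦X⟧` (so that negative exponents make sense). -/
noncomputable def tau (k : ℤ) (n : ℕ) : ℤ :=
  PowerSeries.coeff (R := ℤ) (n - 1)
    ((↑(∏ m ∈ Finset.range n, (isUnit_one_sub_X_pow m).unit ^ k) : PowerSeries ℤ))

/-- If `k - 1` is prime and no generalized pentagonal number `(3r² ± r)/2` satisfies
`0 ≤ n - 1 - (3r² ± r)/2 ≡ 0 (mod k-1)`, then `τ_k(n) ≡ 0 (mod k-1)`. -/
theorem tau_modEq_zero_of_pentagonal (n : ℕ) (hn : 0 < n) (k : ℤ) (hk : Prime (k - 1))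
    (h : ∀ r : ℕ, ∀ e : ℤ, (e = 1 ∨ e = -1) →
      0 ≤ (n : ℤ) - 1 - (3 * (r : ℤ) ^ 2 + e * (r : ℤ)) / 2 →
      ¬ (k - 1) ∣ ((n : ℤ) - 1 - (3 * (r : ℤ) ^ 2 + e * (r : ℤ)) / 2)) :
    tau k n ≡ 0 [ZMOD (k - 1)] := by
  classical
  have hpp : Nat.Prime (k - 1).natAbs := Int.prime_iff_natAbs_prime.mp hk
  set p : ℕ := (k - 1).natAbs with hpdef
  haveI : Fact p.Prime := ⟨hpp⟩
  rw [Int.modEq_zero_iff_dvd, ← Int.natAbs_dvd, ← hpdef,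
    ← ZMod.intCast_zmod_eq_zero_iff_dvd]
  -- units over ZMod p
  have hw : ∀ m : ℕ, IsUnit ((1 : PowerSeries (ZMod p)) - PowerSeries.X ^ (m + 1)) :=
    fun m => isUnit_one_sub_X_pow' (by omega)
  have hy : ∀ m : ℕ, IsUnit ((1 : PowerSeries (ZMod p)) - PowerSeries.X ^ ((m + 1) * p)) :=
    fun m => isUnit_one_sub_X_pow' (Nat.mul_ne_zero (Nat.succ_ne_zero m) hpp.pos.ne')
  -- step 1 : reduce mod p
  have hmapu : ∀ m : ℕ,
      Units.map (PowerSeries.map (Int.castRingHom (ZMod p))).toMonoidHom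
        (isUnit_one_sub_X_pow m).unit = (hw m).unit := by
    intro m
    apply Units.ext
    rw [Units.coe_map, IsUnit.unit_spec]
    show PowerSeries.map (Int.castRingHom (ZMod p)) _ = _
    rw [IsUnit.unit_spec, map_sub, map_one, map_pow, PowerSeries.map_X]
  have hcast : ((tau k n : ℤ) : ZMod p)
      = PowerSeries.coeff (R := (ZMod p)) (n - 1)
          ↑(∏ m ∈ Finset.range n, ((hw m).unit) ^ k) := by
    have h1 : ((tau k n : ℤ) : ZMod p)
        = PowerSeries.coeff (R := (ZMod p)) (n - 1)
            (PowerSeries.map (Int.castRingHom (ZMod p))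
              ↑(∏ m ∈ Finset.range n, (isUnit_one_sub_X_pow m).unit ^ k)) := by
      rw [PowerSeries.coeff_map]
      rfl
    rw [h1]
    congr 1
    rw [show (PowerSeries.map (Int.castRingHom (ZMod p)))
          ↑(∏ m ∈ Finset.range n, (isUnit_one_sub_X_pow m).unit ^ k)
        = ↑(Units.map (PowerSeries.map (Int.castRingHom (ZMod p))).toMonoidHom
            (∏ m ∈ Finset.range n, (isUnit_one_sub_X_pow m).unit ^ k)) from
      (Units.coe_map _ _).symm]
    congr 1
    rw [map_prod]
    apply Finset.prod_congr rfl
    intro m _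
    rw [map_zpow, hmapu]
  rw [hcast]
  -- step 2 : Frobenius
  haveI : CharP (PowerSeries (ZMod p)) p := charP_of_injective_ringHom PowerSeries.C_injective p
  have frob : ∀ m : ℕ, (hw m).unit ^ (p : ℕ) = (hy m).unit := by
    intro m
    apply Units.ext
    rw [Units.val_pow_eq_pow_val, IsUnit.unit_spec, IsUnit.unit_spec, sub_pow_char,
      one_pow, ← pow_mul]
  -- value of the product of the w-units
  have hPval : ((↑(∏ m ∈ Finset.range n, (hw m).unit)) : PowerSeries (ZMod p))
      = ∏ m ∈ Finset.range n, (1 - PowerSeries.X ^ (m + 1) : PowerSeries (ZMod p)) := by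
    rw [show ((↑(∏ m ∈ Finset.range n, (hw m).unit)) : PowerSeries (ZMod p))
        = Units.coeHom _ (∏ m ∈ Finset.range n, (hw m).unit) from rfl, map_prod]
    exact Finset.prod_congr rfl (fun m _ => IsUnit.unit_spec (hw m))
  have hYval : ((↑(∏ m ∈ Finset.range n, (hy m).unit)) : PowerSeries (ZMod p))
      = ∏ m ∈ Finset.range n, (1 - PowerSeries.X ^ ((m + 1) * p) : PowerSeries (ZMod p)) := by
    rw [show ((↑(∏ m ∈ Finset.range n, (hy m).unit)) : PowerSeries (ZMod p))
        = Units.coeHom _ (∏ m ∈ Finset.range n, (hy m).unit) from rfl, map_prod]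
    exact Finset.prod_congr rfl (fun m _ => IsUnit.unit_spec (hy m))
  have hQY : QQ (ZMod p) p ↑(∏ m ∈ Finset.range n, (hy m).unit) := by
    rw [hYval]
    exact QQ_prod _ _ (fun m _ => QQ_one_sub_X_pow (dvd_mul_left p (m + 1)))
  -- key coefficient lemma, applied to any `G` supported on multiples of `p`
  have main : ∀ G : PowerSeries (ZMod p), QQ (ZMod p) p G →
      PowerSeries.coeff (R := (ZMod p)) (n - 1)
        ((∏ m ∈ Finset.range n, (1 - PowerSeries.X ^ (m + 1) : PowerSeries (ZMod p))) * G)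
          = 0 := by
    intro G hG
    rw [PowerSeries.coeff_mul]
    apply Finset.sum_eq_zero
    rintro ⟨a, b⟩ hab
    rw [Finset.HasAntidiagonal.mem_antidiagonal] at hab
    by_cases hpb : p ∣ b
    · have hbdvd : (k - 1) ∣ (b : ℤ) := Int.natAbs_dvd.mp (Int.natCast_dvd_natCast.2 hpb)
      have hnb : (n : ℤ) - 1 - (a : ℤ) = (b : ℤ) := by omega
      have h1 : ∀ r : ℕ, a * 2 ≠ 3 * r ^ 2 + r := by
        intro r hr
        have hr' : (a : ℤ) * 2 = 3 * (r : ℤ) ^ 2 + (r : ℤ) := by exact_mod_cast hr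
        have hra : (3 * (r : ℤ) ^ 2 + 1 * (r : ℤ)) / 2 = (a : ℤ) := by
          rw [show 3 * (r : ℤ) ^ 2 + 1 * (r : ℤ) = (a : ℤ) * 2 by linarith, mul_comm]
          exact Int.mul_ediv_cancel_left _ two_ne_zero
        apply h r 1 (Or.inl rfl) (by rw [hra]; omega)
        rw [hra, hnb]
        exact hbdvd
      have h2 : ∀ r : ℕ, a * 2 ≠ 3 * r ^ 2 - r := by
        intro r hr
        have hrle : r ≤ 3 * r ^ 2 := by nlinarith
        have hr' : (a : ℤ) * 2 = 3 * (r : ℤ) ^ 2 - (r : ℤ) := by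
          zify [hrle] at hr
          linarith
        have hra : (3 * (r : ℤ) ^ 2 + (-1) * (r : ℤ)) / 2 = (a : ℤ) := by
          rw [show 3 * (r : ℤ) ^ 2 + (-1) * (r : ℤ) = (a : ℤ) * 2 by linarith, mul_comm]
          exact Int.mul_ediv_cancel_left _ two_ne_zero
        apply h r (-1) (Or.inr rfl) (by rw [hra]; omega)
        rw [hra, hnb]
        exact hbdvd
      rw [coeff_P_eq_zero (by omega) h1 h2, zero_mul]
    · rw [hG b hpb, mul_zero]
  -- step 3 : split according to the sign of `k - 1`
  rcases Int.natAbs_eq (k - 1) with hsign | hsign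
  · have hsplit : (∏ m ∈ Finset.range n, ((hw m).unit) ^ k)
        = (∏ m ∈ Finset.range n, (hw m).unit) * (∏ m ∈ Finset.range n, (hy m).unit) := by
      rw [← Finset.prod_mul_distrib]
      apply Finset.prod_congr rfl
      intro m _
      have hk1 : k = 1 + (p : ℤ) := by rw [← hpdef] at hsign; omega
      rw [hk1, zpow_add, zpow_one, zpow_natCast, frob]
    rw [hsplit, Units.val_mul, hPval]
    exact main _ hQY
  · have hsplit : (∏ m ∈ Finset.range n, ((hw m).unit) ^ k)
        = (∏ m ∈ Finset.range n, (hw m).unit) * (∏ m ∈ Finset.range n, (hy m).unit)⁻¹ := by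
      rw [← Finset.prod_inv_distrib, ← Finset.prod_mul_distrib]
      apply Finset.prod_congr rfl
      intro m _
      have hk1 : k = 1 + -(p : ℤ) := by rw [← hpdef] at hsign; omega
      rw [hk1, zpow_add, zpow_one, zpow_neg, zpow_natCast, frob]
    rw [hsplit, Units.val_mul, hPval]
    apply main
    apply QQ_inv hQY
    rw [← Units.val_mul, mul_inv_cancel, Units.val_one]
end

section
/- Let n be a positive integer and let k be an integer with |k| ≥ 2. Then n·τ_k(n+1) ≡ 0 (mod |k|). -/
open PowerSeries Finset

/-- The derivative of `u^k` (a unit power) is divisible by `k`. -/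
lemma derivative_zpow_unit {R : Type*} [CommRing R] (u : R⟦X⟧ˣ) (k : ℤ) :
    ∃ g : R⟦X⟧, d⁄dX R (↑(u ^ k) : R⟦X⟧) = k • g := by
  cases k with
  | ofNat a =>
      refine ⟨(↑u : R⟦X⟧) ^ (a - 1) • d⁄dX R (↑u : R⟦X⟧), ?_⟩
      rw [Int.ofNat_eq_natCast, zpow_natCast, Units.val_pow_eq_pow_val,
        Derivation.leibniz_pow, natCast_zsmul]
  | negSucc a =>
      refine ⟨-((↑(u⁻¹) : R⟦X⟧) ^ a • d⁄dX R (↑(u⁻¹) : R⟦X⟧)), ?_⟩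
      have : u ^ (Int.negSucc a) = (u⁻¹) ^ (a + 1) := by
        rw [Int.negSucc_eq, zpow_neg, ← zpow_natCast, ← inv_zpow]
        push_cast
        ring_nf
      rw [this, Units.val_pow_eq_pow_val, Derivation.leibniz_pow]
      simp only [Nat.add_sub_cancel, Int.negSucc_eq, neg_smul, smul_neg, neg_neg,
        ← Nat.cast_add_one, natCast_zsmul]

/-- The derivative of a finite product of `k`-th unit powers is divisible by `k`. -/
lemma derivative_prod_zpow {R : Type*} [CommRing R] {ι : Type*} (s : Finset ι)
    (f : ι → R⟦X⟧ˣ) (k : ℤ) :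
    ∃ g : R⟦X⟧, d⁄dX R (↑(∏ i ∈ s, f i ^ k) : R⟦X⟧) = k • g := by
  classical
  induction s using Finset.induction_on with
  | empty => exact ⟨0, by simp⟩
  | @insert a s' hi ih =>
      obtain ⟨g, hg⟩ := ih
      obtain ⟨g', hg'⟩ := derivative_zpow_unit (f a) k
      refine ⟨(↑(f a ^ k) : R⟦X⟧) • g + (↑(∏ i ∈ s', f i ^ k) : R⟦X⟧) • g', ?_⟩
      rw [Finset.prod_insert hi, Units.val_mul, Derivation.leibniz, hg, hg',
        smul_comm ((↑(f a ^ k) : R⟦X⟧)) k g, smul_comm ((↑(∏ i ∈ s', f i ^ k) : R⟦X⟧)) k g',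
        smul_add]

/-- For `|k| ≥ 2` and `n ≥ 1`, we have `n·τ_k(n+1) ≡ 0 (mod |k|)`. -/
theorem mul_tau_modEq_zero (n : ℕ) (hn : 0 < n) (k : ℤ) (hk : 2 ≤ |k|) :
    (n : ℤ) * tau k (n + 1) ≡ 0 [ZMOD |k|] := by
  rw [Int.modEq_zero_iff_dvd, abs_dvd]
  obtain ⟨g, hg⟩ := derivative_prod_zpow (Finset.range (n + 1))
    (fun m => (isUnit_one_sub_X_pow m).unit) k
  have h1 : tau k (n + 1) * (n : ℤ) = PowerSeries.coeff (R := ℤ) (n - 1) (k • g) := by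
    rw [← hg, PowerSeries.coeff_derivative]
    have : n - 1 + 1 = n := Nat.succ_pred_eq_of_pos hn
    rw [this, tau]
    push_cast [Nat.add_sub_cancel]
    rw [Nat.cast_pred hn]
    ring
  have h2 : (n : ℤ) * tau k (n + 1) = k * PowerSeries.coeff (R := ℤ) (n - 1) g := by
    rw [mul_comm, h1, map_zsmul, smul_eq_mul]
  rw [h2]
  exact Dvd.intro _ rfl
end

section
/- Let m ≥ 0 be an integer and let k be an integer with |k| ≥ 2. For every positive divisor d of |k| with d < |k|, and for every positive integer r with gcd(r, |k|/d) = 1, one has τ_k(|k|·m + d·r + 1) ≡ 0 (mod |k|/d). -/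
open PowerSeries Finset

section aux

/-- Nat-power case of the logarithmic-derivative identity. -/
lemma deriv_pow_mul (u : (PowerSeries ℤ)ˣ) (n : ℕ) :
    (d⁄dX ℤ (↑(u ^ n) : PowerSeries ℤ)) * ↑u
      = (n : ℤ) • ((↑(u ^ n) : PowerSeries ℤ) * d⁄dX ℤ (↑u : PowerSeries ℤ)) := by
  induction n with
  | zero => simp [Derivation.map_one_eq_zero]
  | succ n ih =>
    have h1 : ((u ^ (n + 1) : (PowerSeries ℤ)ˣ) : PowerSeries ℤ) = ↑(u ^ n) * ↑u := by
      rw [← Units.val_mul, pow_succ]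
    rw [h1, Derivation.leibniz]
    simp only [smul_eq_mul, zsmul_eq_mul] at ih ⊢
    push_cast at ih ⊢
    linear_combination (↑u : PowerSeries ℤ) * ih

/-- Zpow case of the logarithmic-derivative identity. -/
lemma deriv_zpow_mul (u : (PowerSeries ℤ)ˣ) (k : ℤ) :
    (d⁄dX ℤ (↑(u ^ k) : PowerSeries ℤ)) * ↑u
      = k • ((↑(u ^ k) : PowerSeries ℤ) * d⁄dX ℤ (↑u : PowerSeries ℤ)) := by
  obtain ⟨n, rfl | rfl⟩ := Int.eq_nat_or_neg k
  · rw [zpow_natCast]; exact_mod_cast deriv_pow_mul u n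
  · have h0 : ((u ^ (n : ℤ) : (PowerSeries ℤ)ˣ) : PowerSeries ℤ)
        * ((u ^ (-(n : ℤ)) : (PowerSeries ℤ)ˣ) : PowerSeries ℤ) = 1 := by
      rw [← Units.val_mul, ← zpow_add]; simp
    have hD := congrArg (d⁄dX ℤ) h0
    rw [Derivation.leibniz, Derivation.map_one_eq_zero] at hD
    have hpos := deriv_pow_mul u n
    rw [← zpow_natCast u n] at hpos
    simp only [smul_eq_mul, zsmul_eq_mul, Int.cast_neg] at hD hpos ⊢
    set A : PowerSeries ℤ := ((u ^ (n : ℤ) : (PowerSeries ℤ)ˣ) : PowerSeries ℤ) with hA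
    set B : PowerSeries ℤ := ((u ^ (-(n : ℤ)) : (PowerSeries ℤ)ˣ) : PowerSeries ℤ) with hB
    set U : PowerSeries ℤ := ((u : PowerSeries ℤ)) with hU
    set N : PowerSeries ℤ := (((n : ℤ) : PowerSeries ℤ)) with hN
    linear_combination U * B * hD - B * B * hpos
      - (d⁄dX ℤ B * U + N * B * d⁄dX ℤ U) * h0

lemma dvd_coeff_deriv_zpow (u : (PowerSeries ℤ)ˣ) (k : ℤ) (j : ℕ) :
    k ∣ PowerSeries.coeff (R := ℤ) j (d⁄dX ℤ (↑(u ^ k) : PowerSeries ℤ)) := by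
  have h : d⁄dX ℤ (↑(u ^ k) : PowerSeries ℤ)
      = k • (((↑(u ^ k) : PowerSeries ℤ) * d⁄dX ℤ (↑u : PowerSeries ℤ)) * ↑u⁻¹) := by
    have h2 : (d⁄dX ℤ (↑(u ^ k) : PowerSeries ℤ)) * (↑u * ↑u⁻¹)
        = k • ((↑(u ^ k) : PowerSeries ℤ) * d⁄dX ℤ (↑u : PowerSeries ℤ)) * ↑u⁻¹ := by
      rw [← mul_assoc, deriv_zpow_mul]
    rw [← Units.val_mul, mul_inv_cancel, Units.val_one, mul_one] at h2
    rw [h2, smul_mul_assoc]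
  rw [h, map_zsmul]
  exact Dvd.intro _ rfl

lemma dvd_succ_mul_coeff (u : (PowerSeries ℤ)ˣ) (k : ℤ) (j : ℕ) :
    k ∣ ((j : ℤ) + 1) * PowerSeries.coeff (R := ℤ) (j + 1) (↑(u ^ k) : PowerSeries ℤ) := by
  have := dvd_coeff_deriv_zpow u k j
  rwa [PowerSeries.coeff_derivative, mul_comm,
    show ((j:ℤ)+1) = ((j+1 : ℕ) : ℤ) by push_cast; ring] at this

end aux

/-- For `|k| ≥ 2`, `m ≥ 0`, any positive divisor `d` of `|k|` with `d < |k|`, and any positive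
integer `r` with `gcd(r, |k|/d) = 1`, we have `τ_k(|k|m + dr + 1) ≡ 0 (mod |k|/d)`. -/
theorem tau_modEq_zero_divisor (m : ℕ) (k : ℤ) (hk : 2 ≤ |k|)
    (d : ℕ) (hd0 : 0 < d) (hdvd : d ∣ k.natAbs) (hdlt : d < k.natAbs)
    (r : ℕ) (hr : 0 < r) (hgcd : Nat.gcd r (k.natAbs / d) = 1) :
    tau k (k.natAbs * m + d * r + 1) ≡ 0 [ZMOD ((k.natAbs / d : ℕ) : ℤ)] := by
  set a : ℕ := k.natAbs * m + d * r with ha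
  set w : (PowerSeries ℤ)ˣ := ∏ i ∈ Finset.range (a + 1), (isUnit_one_sub_X_pow i).unit with hw
  have htau : tau k (a + 1) = PowerSeries.coeff (R := ℤ) a (↑(w ^ k) : PowerSeries ℤ) := by
    rw [tau, Nat.add_sub_cancel, hw, ← Finset.prod_zpow]
  have hapos : 1 ≤ a := by
    have : 1 ≤ d * r := Nat.one_le_iff_ne_zero.mpr (by positivity)
    omega
  obtain ⟨b, hb⟩ : ∃ b, a = b + 1 := ⟨a - 1, by omega⟩
  have hdvd1 : k ∣ (a : ℤ) * tau k (a + 1) := by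
    rw [htau, hb]
    push_cast
    exact dvd_succ_mul_coeff w k b
  set q : ℕ := k.natAbs / d with hq
  have hkd : k.natAbs = d * q := by rw [hq, Nat.mul_div_cancel' hdvd]
  have habs : ((k.natAbs : ℤ)) ∣ (a : ℤ) * tau k (a + 1) := by
    rwa [Int.natCast_natAbs, abs_dvd]
  have h2 : ((d : ℤ) * q) ∣ ((d : ℤ) * r) * tau k (a + 1) := by
    have hsplit : ((a : ℤ)) * tau k (a + 1)
        = ((d : ℤ) * q) * ((m : ℤ) * tau k (a + 1)) + ((d : ℤ) * r) * tau k (a + 1) := by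
      rw [ha]; push_cast [hkd]; ring
    have h3 : ((d : ℤ) * q) ∣ (((d : ℤ) * q) * ((m : ℤ) * tau k (a + 1))
        + ((d : ℤ) * r) * tau k (a + 1)) := by
      rw [← hsplit]
      rw [hkd] at habs; push_cast at habs; exact habs
    exact (dvd_add_right (Dvd.intro _ rfl)).mp h3
  have h4 : (q : ℤ) ∣ (r : ℤ) * tau k (a + 1) := by
    rcases h2 with ⟨c, hc⟩
    refine ⟨c, ?_⟩
    have hd' : (d : ℤ) ≠ 0 := by exact_mod_cast hd0.ne'
    apply mul_left_cancel₀ hd'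
    rw [← mul_assoc, ← mul_assoc]
    linarith [hc]
  have hcop : IsCoprime (q : ℤ) (r : ℤ) := by
    rw [Int.isCoprime_iff_gcd_eq_one, Int.gcd_natCast_natCast, Nat.gcd_comm]
    exact hgcd
  have h5 : (q : ℤ) ∣ tau k (a + 1) := hcop.dvd_of_dvd_mul_left h4
  exact (Int.modEq_zero_iff_dvd).mpr h5
end

section
/- Let k be a positive integer and n a positive integer. Then τ_k(n+1) = Σ (-1)^{f_1 + f_2 + ⋯ + f_r} · C(k, f_1)·C(k, f_2)⋯C(k, f_r), where the sum runs over all partitions of n written as n = a_1^{f_1} a_2^{f_2} ⋯ a_r^{f_r} with distinct parts a_1 > a_2 > ⋯ > a_r and multiplicities f_1, …, f_r satisfying f_i ≤ k for every i; here C(·,·) denotes the binomial coefficient. -/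
open PowerSeries Finset

/-- The weight of a multiplicity `f`. -/
def tauW (k f : ℕ) : ℤ := if f ≤ k then (-1) ^ f * (k.choose f : ℤ) else 0

lemma coeff_one_sub_X_pow_pow (k i d : ℕ) (hi : 0 < i) :
    PowerSeries.coeff (R := ℤ) d (((1 : PowerSeries ℤ) - X ^ i) ^ k) =
      if i ∣ d then tauW k (d / i) else 0 := by
  have h1 : ((1 : PowerSeries ℤ) - X ^ i) ^ k =
      ∑ j ∈ range (k + 1), PowerSeries.C (R := ℤ) ((-1) ^ j * (k.choose j : ℤ)) * X ^ (i * j) := by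
    rw [sub_eq_add_neg, add_comm, add_pow]
    refine Finset.sum_congr rfl fun j _ => ?_
    rw [one_pow, mul_one, map_mul, map_pow, map_neg, map_one, map_natCast, neg_pow, ← pow_mul]
    ring
  rw [h1, map_sum]
  simp_rw [PowerSeries.coeff_C_mul, PowerSeries.coeff_X_pow, mul_ite, mul_one, mul_zero]
  by_cases hd : i ∣ d
  · obtain ⟨q, rfl⟩ := hd
    have hiq : i * q / i = q := Nat.mul_div_cancel_left q hi
    simp_rw [Nat.mul_left_cancel_iff hi]
    rw [Finset.sum_ite_eq (range (k + 1)) q, if_pos (dvd_mul_right i q), hiq]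
    simp [tauW, Nat.lt_succ_iff]
  · rw [if_neg hd, Finset.sum_eq_zero]
    intro j _
    rw [if_neg]
    rintro rfl
    exact hd (dvd_mul_right i j)

lemma key (k n N : ℕ) (hN : n < N) :
    PowerSeries.coeff (R := ℤ) n (∏ m ∈ range N, ((1 : PowerSeries ℤ) - X ^ (m + 1)) ^ k) =
      ∑ p : n.Partition, ∏ m ∈ range N, tauW k (p.parts.count (m + 1)) := by
  classical
  rw [coeff_prod]
  have hco : ∀ l : ℕ →₀ ℕ, ∀ m ∈ range N,
      PowerSeries.coeff (R := ℤ) (l m) (((1 : PowerSeries ℤ) - X ^ (m + 1)) ^ k) =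
        if (m + 1) ∣ l m then tauW k (l m / (m + 1)) else 0 :=
    fun l m _ => coeff_one_sub_X_pow_pow k (m + 1) (l m) m.succ_pos
  rw [Finset.sum_congr rfl fun l _ => Finset.prod_congr rfl (hco l)]
  rw [← Finset.sum_filter_of_ne (p := fun l : ℕ →₀ ℕ => ∀ m ∈ range N, (m + 1) ∣ l m)]
  · symm
    have hmem : ∀ p : n.Partition, ∀ a ∈ p.parts, a ∈ (range N).image (· + 1) := by
      intro p a ha
      have hpos := p.parts_pos ha
      have hle : a ≤ n := by
        rw [← p.parts_sum]
        exact Multiset.single_le_sum (fun x _ => Nat.zero_le x) a ha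
      simp only [mem_image, mem_range]
      exact ⟨a - 1, by omega, by omega⟩
    have hsupp : ∀ p : n.Partition, ∀ m : ℕ, (m + 1) * p.parts.count (m + 1) ≠ 0 →
        m ∈ range N := by
      intro p m hm
      have : (m + 1) ∈ p.parts := by
        rw [← Multiset.count_pos]
        exact Nat.pos_of_ne_zero fun h => hm (by rw [h, mul_zero])
      have := hmem p _ this
      simp only [mem_image, mem_range] at this
      obtain ⟨b, hb, hb'⟩ := this
      rw [mem_range]
      omega
    set φ : n.Partition → (ℕ →₀ ℕ) := fun p =>
      Finsupp.onFinset (range N) (fun m => (m + 1) * p.parts.count (m + 1)) (hsupp p) with hφ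
    refine Finset.sum_bij (fun p _ => φ p) ?_ ?_ ?_ ?_
    · -- maps into
      intro p _
      simp only [mem_filter, mem_finsuppAntidiag]
      refine ⟨⟨?_, Finsupp.support_onFinset_subset⟩, fun m _ => dvd_mul_right _ _⟩
      have h2 : ∑ m ∈ range N, (m + 1) * p.parts.count (m + 1) =
          ∑ a ∈ (range N).image (· + 1), a * p.parts.count a := by
        rw [Finset.sum_image (fun a _ b _ h => by omega)]
      show ∑ m ∈ range N, (m + 1) * p.parts.count (m + 1) = n
      rw [h2]
      conv_rhs => rw [← p.parts_sum]
      rw [Finset.sum_multiset_count_of_subset p.parts ((range N).image (· + 1))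
        (fun a ha => hmem p a (Multiset.mem_toFinset.mp ha))]
      exact Finset.sum_congr rfl fun a _ => by rw [smul_eq_mul, mul_comm]
    · -- injective
      intro p₁ _ p₂ _ h
      have hc : ∀ m : ℕ, p₁.parts.count (m + 1) = p₂.parts.count (m + 1) := by
        intro m
        have := DFunLike.congr_fun h m
        simp only [φ, Finsupp.onFinset_apply] at this
        exact Nat.eq_of_mul_eq_mul_left m.succ_pos this
      ext1
      ext a
      rcases a with _ | m
      · rw [Multiset.count_eq_zero_of_notMem, Multiset.count_eq_zero_of_notMem]
        · exact fun h0 => lt_irrefl 0 (p₂.parts_pos h0)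
        · exact fun h0 => lt_irrefl 0 (p₁.parts_pos h0)
      · exact hc m
    · -- surjective
      intro l hl
      simp only [mem_filter, mem_finsuppAntidiag] at hl
      obtain ⟨⟨hsum, hsub⟩, hdvd⟩ := hl
      refine ⟨⟨∑ m ∈ range N, Multiset.replicate (l m / (m + 1)) (m + 1), ?_, ?_⟩,
        mem_univ _, ?_⟩
      · intro i hi
        rw [Multiset.mem_sum] at hi
        obtain ⟨m, _, hm⟩ := hi
        rw [Multiset.eq_of_mem_replicate hm]
        exact m.succ_pos
      · rw [Multiset.sum_sum]
        simp_rw [Multiset.sum_replicate, smul_eq_mul]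
        rw [← hsum]
        exact Finset.sum_congr rfl fun m hm => Nat.div_mul_cancel (hdvd m hm)
      · ext m
        simp only [φ, Finsupp.onFinset_apply]
        have hcount : Multiset.count (m + 1)
            (∑ m' ∈ range N, Multiset.replicate (l m' / (m' + 1)) (m' + 1)) =
            if m ∈ range N then l m / (m + 1) else 0 := by
          rw [Multiset.count_sum']
          simp_rw [Multiset.count_replicate]
          have : ∀ m' : ℕ, (m' + 1 = m + 1) = (m' = m) := fun m' => by
            simp only [eq_iff_iff]; omega
          simp_rw [this]
          exact Finset.sum_ite_eq' (range N) m _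
        rw [hcount]
        by_cases hm : m ∈ range N
        · rw [if_pos hm, Nat.mul_div_cancel' (hdvd m hm)]
        · rw [if_neg hm, mul_zero]
          by_contra h0
          exact hm (hsub (Finsupp.mem_support_iff.mpr (Ne.symm h0)))
    · -- values agree
      intro p _
      refine Finset.prod_congr rfl fun m _ => ?_
      simp only [φ, Finsupp.onFinset_apply]
      simp only [dvd_mul_right, ↓reduceIte, Nat.mul_div_cancel_left _ m.succ_pos]
  · -- nonzero terms satisfy the divisibility condition
    intro l _ hne
    by_contra h
    push_neg at h
    obtain ⟨m, hm, hd⟩ := h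
    exact hne (Finset.prod_eq_zero hm (if_neg hd))

/-- For a positive integer `k`, `τ_k(n+1)` is the sum, over all partitions of `n` in which
every multiplicity is at most `k`, of `(-1)^(f₁+⋯+f_r)·C(k,f₁)⋯C(k,f_r)`, where the `f_i` are
the multiplicities of the distinct parts.  (`f₁+⋯+f_r` is the total number of parts counted
with multiplicity.) -/
theorem tau_eq_binomial_weighted_partition_sum (k : ℕ) (hk : 0 < k) (n : ℕ) (hn : 0 < n) :
    tau (k : ℤ) (n + 1) =
      ∑ p : n.Partition,
        if ∀ a ∈ p.parts, p.parts.count a ≤ k then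
          (-1 : ℤ) ^ (Multiset.card p.parts) *
            ∏ a ∈ p.parts.toFinset, (k.choose (p.parts.count a) : ℤ)
        else 0 := by
  classical
  have hcoe : ((↑(∏ m ∈ Finset.range (n + 1), (isUnit_one_sub_X_pow m).unit ^ (k : ℤ)) :
      PowerSeries ℤ)) = ∏ m ∈ range (n + 1), ((1 : PowerSeries ℤ) - X ^ (m + 1)) ^ k := by
    rw [Units.coe_prod]
    refine Finset.prod_congr rfl fun m _ => ?_
    rw [zpow_natCast, Units.val_pow_eq_pow_val, IsUnit.unit_spec]
  rw [tau, Nat.add_sub_cancel, hcoe, key k n (n + 1) n.lt_succ_self]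
  refine Finset.sum_congr rfl fun p _ => ?_
  have hmem : ∀ a ∈ p.parts, a ∈ (range (n + 1)).image (· + 1) := by
    intro a ha
    have hpos := p.parts_pos ha
    have hle : a ≤ n := by
      rw [← p.parts_sum]
      exact Multiset.single_le_sum (fun x _ => Nat.zero_le x) a ha
    simp only [mem_image, mem_range]
    exact ⟨a - 1, by omega, by omega⟩
  have h1 : ∏ m ∈ range (n + 1), tauW k (p.parts.count (m + 1)) =
      ∏ a ∈ (range (n + 1)).image (· + 1), tauW k (p.parts.count a) := by
    rw [Finset.prod_image (fun a _ b _ h => by omega)]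
  have h2 : ∏ a ∈ (range (n + 1)).image (· + 1), tauW k (p.parts.count a) =
      ∏ a ∈ p.parts.toFinset, tauW k (p.parts.count a) := by
    symm
    refine Finset.prod_subset (fun a ha => hmem a (Multiset.mem_toFinset.mp ha)) ?_
    intro a _ ha
    rw [Multiset.count_eq_zero_of_notMem (fun h => ha (Multiset.mem_toFinset.mpr h))]
    simp [tauW]
  rw [h1, h2]
  by_cases hC : ∀ a ∈ p.parts, p.parts.count a ≤ k
  · rw [if_pos hC]
    have h3 : ∀ a ∈ p.parts.toFinset, tauW k (p.parts.count a) =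
        (-1 : ℤ) ^ (p.parts.count a) * (k.choose (p.parts.count a) : ℤ) := by
      intro a ha
      rw [tauW, if_pos (hC a (Multiset.mem_toFinset.mp ha))]
    rw [Finset.prod_congr rfl h3, Finset.prod_mul_distrib,
      Finset.prod_pow_eq_pow_sum, Multiset.toFinset_sum_count_eq]
  · rw [if_neg hC]
    push_neg at hC
    obtain ⟨a, ha, hka⟩ := hC
    refine Finset.prod_eq_zero (Multiset.mem_toFinset.mpr ha) ?_
    rw [tauW, if_neg (by omega)]
end

section
/- Let k be a positive integer and let A = {a ∈ ℕ : 1 ≤ a ≤ k and C(k, a) ≡ 1 (mod 2)}. Then for every positive integer n, τ_k(n+1) ≡ F_A(n) (mod 2). -/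
open PowerSeries Finset

namespace TauFA

noncomputable section
variable {α : Type*}
open scoped Classical
open Finset.HasAntidiagonal

/-- A convenience constructor for the power series whose coefficients indicate a subset. -/
def indicatorSeries (α : Type*) [Semiring α] (s : Set ℕ) : PowerSeries α :=
  PowerSeries.mk fun n => if n ∈ s then 1 else 0

theorem coeff_indicator (s : Set ℕ) [Semiring α] (n : ℕ) :
    coeff (R := α) n (indicatorSeries _ s) = if n ∈ s then 1 else 0 :=
  coeff_mk _ _

theorem coeff_indicator_pos (s : Set ℕ) [Semiring α] (n : ℕ) (h : n ∈ s) :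
    coeff (R := α) n (indicatorSeries _ s) = 1 := by rw [coeff_indicator, if_pos h]

theorem coeff_indicator_neg (s : Set ℕ) [Semiring α] (n : ℕ) (h : n ∉ s) :
    coeff (R := α) n (indicatorSeries _ s) = 0 := by rw [coeff_indicator, if_neg h]

theorem constantCoeff_indicator (s : Set ℕ) [Semiring α] :
    constantCoeff (R := α) (indicatorSeries _ s) = if 0 ∈ s then 1 else 0 :=
  rfl

-- The main workhorse of the partition theorem proof.
theorem partialGF_prop (α : Type*) [CommSemiring α] (n : ℕ) (s : Finset ℕ) (hs : ∀ i ∈ s, 0 < i)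
    (c : ℕ → Set ℕ) (hc : ∀ i, i ∉ s → 0 ∈ c i) :
    #{p : n.Partition | (∀ j, p.parts.count j ∈ c j) ∧ ∀ j ∈ p.parts, j ∈ s} =
      coeff (R := α) n (∏ i ∈ s, indicatorSeries α ((· * i) '' c i)) := by
  simp_rw [coeff_prod, coeff_indicator, prod_boole, sum_boole]
  apply congr_arg
  simp only [mem_univ, forall_true_left, not_and, not_forall, exists_prop,
    Set.mem_image, not_exists]
  set φ : (a : Nat.Partition n) →
    a ∈ filter (fun p ↦ (∀ (j : ℕ), Multiset.count j p.parts ∈ c j) ∧ ∀ j ∈ p.parts, j ∈ s) univ →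
    ℕ →₀ ℕ := fun p _ => {
      toFun := fun i => Multiset.count i p.parts • i
      support := Finset.filter (fun i => i ≠ 0) p.parts.toFinset
      mem_support_toFun := fun a => by
        simp only [smul_eq_mul, ne_eq, mul_eq_zero, Multiset.count_eq_zero]
        rw [not_or, not_not]
        simp only [Multiset.mem_toFinset, not_not, mem_filter] }
  refine Finset.card_bij φ ?_ ?_ ?_
  · intro a ha
    simp only [φ, not_forall, not_exists, not_and, exists_prop, mem_filter]
    rw [mem_finsuppAntidiag]
    dsimp only [ne_eq, smul_eq_mul, id_eq, eq_mpr_eq_cast, le_eq_subset, Finsupp.coe_mk]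
    simp only [mem_univ, forall_true_left, not_and, not_forall, exists_prop,
      mem_filter, true_and] at ha
    refine ⟨⟨?_, fun i ↦ ?_⟩, fun i _ ↦ ⟨a.parts.count i, ha.1 i, rfl⟩⟩
    · conv_rhs => simp [← a.parts_sum]
      rw [sum_multiset_count_of_subset _ s]
      · simp only [smul_eq_mul]
      · intro i
        simp only [Multiset.mem_toFinset, not_not, mem_filter]
        apply ha.2
    · simp only [ne_eq, Multiset.mem_toFinset, not_not, mem_filter, and_imp]
      exact fun hi _ ↦ ha.2 i hi
  · intro p₁ hp₁ p₂ hp₂ h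
    apply Nat.Partition.ext
    simp only [true_and, mem_univ, mem_filter] at hp₁ hp₂
    ext i
    simp only [φ, ne_eq, Multiset.mem_toFinset, not_not, smul_eq_mul, Finsupp.mk.injEq] at h
    by_cases hi : i = 0
    · rw [hi]
      rw [Multiset.count_eq_zero_of_notMem]
      · rw [Multiset.count_eq_zero_of_notMem]
        intro a; exact Nat.lt_irrefl 0 (hs 0 (hp₂.2 0 a))
      intro a; exact Nat.lt_irrefl 0 (hs 0 (hp₁.2 0 a))
    · rw [← mul_left_inj' hi]
      rw [funext_iff] at h
      exact h.2 i
  · simp only [φ, mem_filter, mem_finsuppAntidiag, mem_univ, exists_prop, true_and, and_assoc]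
    rintro f ⟨hf, hf₃, hf₄⟩
    have hf' : f ∈ finsuppAntidiag s n := mem_finsuppAntidiag.mpr ⟨hf, hf₃⟩
    simp only [mem_finsuppAntidiag] at hf'
    refine ⟨⟨∑ i ∈ s, Multiset.replicate (f i / i) i, ?_, ?_⟩, ?_, ?_, ?_⟩
    · intro i hi
      simp only [exists_prop, Multiset.mem_sum, mem_map, Function.Embedding.coeFn_mk] at hi
      rcases hi with ⟨t, ht, z⟩
      apply hs
      rwa [Multiset.eq_of_mem_replicate z]
    · simp_rw [Multiset.sum_sum, Multiset.sum_replicate, Nat.nsmul_eq_mul]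
      rw [← hf'.1]
      refine sum_congr rfl fun i hi => Nat.div_mul_cancel ?_
      rcases hf₄ i hi with ⟨w, _, hw₂⟩
      rw [← hw₂]
      exact dvd_mul_left _ _
    · intro i
      simp_rw [Multiset.count_sum', Multiset.count_replicate, sum_ite_eq']
      split_ifs with h
      · rcases hf₄ i h with ⟨w, hw₁, hw₂⟩
        rwa [← hw₂, Nat.mul_div_cancel _ (hs i h)]
      · exact hc _ h
    · intro i hi
      rw [Multiset.mem_sum] at hi
      rcases hi with ⟨j, hj₁, hj₂⟩
      rwa [Multiset.eq_of_mem_replicate hj₂]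
    · ext i
      simp_rw [Multiset.count_sum', Multiset.count_replicate, sum_ite_eq']
      simp only [ne_eq, Multiset.mem_toFinset, not_not, smul_eq_mul, ite_mul,
        zero_mul, Finsupp.coe_mk]
      split_ifs with h
      · apply Nat.div_mul_cancel
        rcases hf₄ i h with ⟨w, _, hw₂⟩
        apply Dvd.intro_left _ hw₂
      · apply symm
        rw [← Finsupp.notMem_support_iff]
        exact notMem_mono hf'.2 h


/-- cast of a natural number to `ZMod 2` in terms of parity. -/
lemma natCast_zmod_two (m : ℕ) : (m : ZMod 2) = if m % 2 = 1 then 1 else 0 := by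
  rw [← ZMod.natCast_mod m 2]
  rcases Nat.mod_two_eq_zero_or_one m with h | h <;> simp [h]

lemma one_sub_X_pow_eq_indicator (k i : ℕ) (hi : 0 < i) :
    ((1 : PowerSeries (ZMod 2)) - X ^ i) ^ k =
      indicatorSeries (ZMod 2) ((· * i) '' {a | k.choose a % 2 = 1}) := by
  have h2 : ((1 : PowerSeries (ZMod 2)) - X ^ i) = X ^ i + 1 := by
    have hx : (X ^ i : PowerSeries (ZMod 2)) + X ^ i = 0 := by
      rw [← two_smul (ZMod 2)]
      have h20 : (2 : ZMod 2) = 0 := by decide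
      rw [h20, zero_smul]
    rw [sub_eq_add_neg, neg_eq_of_add_eq_zero_right hx, add_comm]
  rw [h2, add_pow]
  ext j
  rw [map_sum, coeff_indicator]
  have hterm : ∀ m : ℕ,
      (coeff (R := ZMod 2) j) (((X : PowerSeries (ZMod 2)) ^ i) ^ m * 1 ^ (k - m) * (k.choose m : PowerSeries (ZMod 2)))
        = if j = i * m then (k.choose m : ZMod 2) else 0 := by
    intro m
    rw [one_pow, mul_one, ← pow_mul, ← map_natCast (PowerSeries.C (R := ZMod 2)) (k.choose m),
      PowerSeries.coeff_mul_C, PowerSeries.coeff_X_pow, ite_mul, one_mul, zero_mul]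
  simp only [hterm]
  by_cases h : j ∈ (· * i) '' {a | k.choose a % 2 = 1}
  · rw [if_pos h]
    obtain ⟨a, ha, haj⟩ := h
    have ha' : k.choose a % 2 = 1 := ha
    have haj' : a * i = j := haj
    have hak : a ≤ k := by
      by_contra hak
      rw [Nat.choose_eq_zero_of_lt (lt_of_not_ge hak)] at ha'
      simp at ha'
    rw [Finset.sum_eq_single a]
    · rw [if_pos (by rw [← haj', mul_comm]), natCast_zmod_two, if_pos ha']
    · intro b _ hba
      rw [if_neg]
      intro hbj
      have hib : i * b = i * a := by rw [← hbj, ← haj', mul_comm]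
      exact hba (Nat.eq_of_mul_eq_mul_left hi hib)
    · intro hak'
      exact absurd (Finset.mem_range.mpr (Nat.lt_succ_of_le hak)) hak'
  · rw [if_neg h, Finset.sum_eq_zero]
    intro m _
    split_ifs with hmj
    · rw [natCast_zmod_two, if_neg]
      intro hodd
      refine h ⟨m, hodd, ?_⟩
      show m * i = j
      rw [mul_comm]
      exact hmj.symm
    · rfl

end

end TauFA

/-- `F A n` is the number of partitions of `n` in which the multiplicity of every part
belongs to `A`. -/
noncomputable def FA (A : Set ℕ) (n : ℕ) : ℕ :=
  Nat.card {p : n.Partition // ∀ a ∈ p.parts, p.parts.count a ∈ A}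


open TauFA

/-- For a positive integer `k` and `A = {a : 1 ≤ a ≤ k, C(k,a) ≡ 1 (mod 2)}`, we have
`τ_k(n+1) ≡ F_A(n) (mod 2)`. -/
theorem tau_modEq_FA (k : ℕ) (hk : 0 < k) (n : ℕ) (hn : 0 < n) :
    tau (k : ℤ) (n + 1) ≡
      (FA {a : ℕ | 1 ≤ a ∧ a ≤ k ∧ k.choose a % 2 = 1} n : ℤ) [ZMOD 2] := by
  classical
  set A : Set ℕ := {a : ℕ | 1 ≤ a ∧ a ≤ k ∧ k.choose a % 2 = 1} with hA
  set S : Set ℕ := {a : ℕ | k.choose a % 2 = 1} with hS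
  set s : Finset ℕ := (Finset.range (n + 1)).map ⟨fun m => m + 1, add_left_injective 1⟩ with hs
  have hmem_s : ∀ j, j ∈ s ↔ 1 ≤ j ∧ j ≤ n + 1 := by
    intro j
    rw [hs, Finset.mem_map]
    constructor
    · rintro ⟨m, hm, hmj⟩
      simp only [Function.Embedding.coeFn_mk] at hmj
      rw [Finset.mem_range] at hm
      omega
    · rintro ⟨hj1, hj2⟩
      exact ⟨j - 1, Finset.mem_range.mpr (by omega),
        by simp only [Function.Embedding.coeFn_mk]; omega⟩
  -- Step 1: unfold tau
  have h1 : tau (k : ℤ) (n + 1) =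
      PowerSeries.coeff (R := ℤ) n
        (∏ m ∈ Finset.range (n + 1), ((1 : PowerSeries ℤ) - PowerSeries.X ^ (m + 1)) ^ k) := by
    rw [tau]
    have hc : (((∏ m ∈ Finset.range (n + 1), (isUnit_one_sub_X_pow m).unit ^ (k : ℤ)) :
        (PowerSeries ℤ)ˣ) : PowerSeries ℤ) =
        ∏ m ∈ Finset.range (n + 1), ((1 : PowerSeries ℤ) - PowerSeries.X ^ (m + 1)) ^ k := by
      refine Eq.trans (map_prod (Units.coeHom (PowerSeries ℤ)) _ _) ?_
      refine Finset.prod_congr rfl fun m _ => ?_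
      rw [zpow_natCast]
      show (((isUnit_one_sub_X_pow m).unit ^ k : (PowerSeries ℤ)ˣ) : PowerSeries ℤ) = _
      rw [Units.val_pow_eq_pow_val, IsUnit.unit_spec]
    rw [hc]
    norm_num
  -- Step 2: reduce mod 2
  have key : ((tau (k : ℤ) (n + 1) : ℤ) : ZMod 2) = ((FA A n : ℕ) : ZMod 2) := by
    rw [h1]
    have h2 : ((PowerSeries.coeff (R := ℤ) n
        (∏ m ∈ Finset.range (n + 1), ((1 : PowerSeries ℤ) - PowerSeries.X ^ (m + 1)) ^ k) : ℤ) :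
          ZMod 2) =
        PowerSeries.coeff (R := ZMod 2) n
          (∏ m ∈ Finset.range (n + 1),
            ((1 : PowerSeries (ZMod 2)) - PowerSeries.X ^ (m + 1)) ^ k) := by
      rw [show ((PowerSeries.coeff (R := ℤ) n
          (∏ m ∈ Finset.range (n + 1), ((1 : PowerSeries ℤ) - PowerSeries.X ^ (m + 1)) ^ k) : ℤ) :
            ZMod 2) = (Int.castRingHom (ZMod 2)) (PowerSeries.coeff (R := ℤ) n
          (∏ m ∈ Finset.range (n + 1), ((1 : PowerSeries ℤ) - PowerSeries.X ^ (m + 1)) ^ k))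
        from rfl, ← PowerSeries.coeff_map]
      congr 1
      rw [map_prod]
      refine Finset.prod_congr rfl fun m _ => ?_
      simp only [map_pow, map_sub, map_one, PowerSeries.map_X]
    rw [h2]
    have h3 : (∏ m ∈ Finset.range (n + 1),
          ((1 : PowerSeries (ZMod 2)) - PowerSeries.X ^ (m + 1)) ^ k) =
        ∏ i ∈ s, indicatorSeries (ZMod 2) ((· * i) '' S) := by
      rw [hs, Finset.prod_map]
      exact Finset.prod_congr rfl fun m _ =>
        one_sub_X_pow_eq_indicator k (m + 1) (Nat.succ_pos m)
    rw [h3]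
    have h4 := partialGF_prop (ZMod 2) n s
      (fun i hi => by have := (hmem_s i).mp hi; omega) (fun _ => S)
      (fun i _ => by simp [hS, Nat.choose_zero_right])
    rw [← h4]
    congr 1
    rw [FA, Nat.card_eq_fintype_card, Fintype.card_subtype]
    congr 1
    apply Finset.filter_congr
    intro p _
    constructor
    · rintro ⟨hp1, _⟩ a ha
      have hcount : 1 ≤ p.parts.count a := (Multiset.one_le_count_iff_mem).mpr ha
      have hodd : k.choose (p.parts.count a) % 2 = 1 := hp1 a
      have hle : p.parts.count a ≤ k := by
        by_contra hgt
        rw [Nat.choose_eq_zero_of_lt (lt_of_not_ge hgt)] at hodd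
        simp at hodd
      exact ⟨hcount, hle, hodd⟩
    · intro hp
      constructor
      · intro j
        by_cases hj : j ∈ p.parts
        · exact ((hp j hj).2.2 : k.choose (p.parts.count j) % 2 = 1)
        · rw [Multiset.count_eq_zero_of_notMem hj]
          simp [hS, Nat.choose_zero_right]
      · intro j hj
        rw [hmem_s]
        refine ⟨p.parts_pos hj, ?_⟩
        have : j ≤ p.parts.sum :=
          Multiset.single_le_sum (fun _ _ => Nat.zero_le _) _ hj
        rw [p.parts_sum] at this
        omega
  have key2 : ((tau (k : ℤ) (n + 1) : ℤ) : ZMod 2) = (((FA A n : ℤ)) : ZMod 2) := by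
    push_cast
    exact key
  have := (ZMod.intCast_eq_intCast_iff (tau (k : ℤ) (n + 1)) ((FA A n : ℤ)) 2).mp key2
  exact_mod_cast this
end

section
/- Let n be a positive integer. If 3 divides n, then τ(n+1) ≡ R_9(n/3) (mod 3); if 3 does not divide n, then τ(n+1) ≡ 0 (mod 3). -/
open PowerSeries Finset

/-- `regularPartitions t n` is the number of `t`-regular partitions of `n`, i.e. partitions of
`n` none of whose parts is divisible by `t`. -/
noncomputable def regularPartitions (t n : ℕ) : ℕ :=
  Nat.card {p : n.Partition // ∀ a ∈ p.parts, ¬ t ∣ a}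

namespace RamanujanAux

noncomputable section

open scoped Classical

variable {α : Type*}

universe u
variable {ι : Type u}

/-- A convenience constructor for the power series whose coefficients indicate a subset. -/
def indicatorSeries (α : Type*) [Semiring α] (s : Set ℕ) : PowerSeries α :=
  PowerSeries.mk fun n => if n ∈ s then 1 else 0

theorem coeff_indicator (s : Set ℕ) [Semiring α] (n : ℕ) :
    coeff (R := α) n (indicatorSeries _ s) = if n ∈ s then 1 else 0 :=
  coeff_mk _ _

theorem coeff_indicator_pos (s : Set ℕ) [Semiring α] (n : ℕ) (h : n ∈ s) :
    coeff (R := α) n (indicatorSeries _ s) = 1 := by rw [coeff_indicator, if_pos h]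

theorem coeff_indicator_neg (s : Set ℕ) [Semiring α] (n : ℕ) (h : n ∉ s) :
    coeff (R := α) n (indicatorSeries _ s) = 0 := by rw [coeff_indicator, if_neg h]

theorem constantCoeff_indicator (s : Set ℕ) [Semiring α] :
    constantCoeff (R := α) (indicatorSeries _ s) = if 0 ∈ s then 1 else 0 :=
  rfl

theorem two_series (i : ℕ) [Semiring α] :
    1 + (X : PowerSeries α) ^ i.succ = indicatorSeries α {0, i.succ} := by
  ext n
  simp only [coeff_indicator, coeff_one, coeff_X_pow, Set.mem_insert_iff, Set.mem_singleton_iff,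
    map_add]
  cases' n with d
  · simp [(Nat.succ_ne_zero i).symm]
  · simp [Nat.succ_ne_zero d]

theorem num_series' [Field α] (i : ℕ) :
    (1 - (X : PowerSeries α) ^ (i + 1))⁻¹ = indicatorSeries α {k | i + 1 ∣ k} := by
  rw [PowerSeries.inv_eq_iff_mul_eq_one]
  · ext n
    cases n with
    | zero => simp [mul_sub, zero_pow, constantCoeff_indicator]
    | succ n =>
      simp only [coeff_one, if_false, mul_sub, mul_one, coeff_indicator,
        LinearMap.map_sub, reduceCtorEq]
      simp_rw [coeff_mul, coeff_X_pow, coeff_indicator, @boole_mul _ _ _ _]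
      erw [@sum_ite _ _ _ _ _ (fun _ => Classical.propDecidable _), sum_ite]
      simp_rw [@filter_filter _ _ _ _ _, sum_const_zero, add_zero, sum_const, nsmul_eq_mul, mul_one,
        sub_eq_iff_eq_add, zero_add]
      symm
      split_ifs with h
      · suffices #{a ∈ antidiagonal (n + 1) | i + 1 ∣ a.fst ∧ a.snd = i + 1} = 1 by
          simp only [Set.mem_setOf_eq]; convert congr_arg ((↑) : ℕ → α) this; norm_cast
        rw [card_eq_one]
        cases' h with p hp
        refine ⟨((i + 1) * (p - 1), i + 1), ?_⟩
        ext ⟨a₁, a₂⟩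
        simp only [mem_filter, Prod.mk.injEq, HasAntidiagonal.mem_antidiagonal, mem_singleton]
        constructor
        · rintro ⟨a_left, ⟨a, rfl⟩, rfl⟩
          refine ⟨?_, rfl⟩
          rw [Nat.mul_sub_left_distrib, ← hp, ← a_left, mul_one, Nat.add_sub_cancel]
        · rintro ⟨rfl, rfl⟩
          match p with
          | 0 => rw [mul_zero] at hp; cases hp
          | p + 1 => rw [hp]; simp [mul_add]
      · suffices #{a ∈ antidiagonal (n + 1) | i + 1 ∣ a.fst ∧ a.snd = i + 1} = 0 by
          simp only [Set.mem_setOf_eq]; convert congr_arg ((↑) : ℕ → α) this; norm_cast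
        rw [card_eq_zero]
        apply eq_empty_of_forall_notMem
        simp only [Prod.forall, mem_filter, not_and, HasAntidiagonal.mem_antidiagonal]
        rintro _ h₁ h₂ ⟨a, rfl⟩ rfl
        apply h
        simp [← h₂]
  · simp [zero_pow]

def mkOdd : ℕ ↪ ℕ :=
  ⟨fun i => 2 * i + 1, fun x y h => by linarith⟩

-- The main workhorse of the partition theorem proof.
theorem partialGF_prop (α : Type*) [CommSemiring α] (n : ℕ) (s : Finset ℕ) (hs : ∀ i ∈ s, 0 < i)
    (c : ℕ → Set ℕ) (hc : ∀ i, i ∉ s → 0 ∈ c i) :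
    #{p : n.Partition | (∀ j, p.parts.count j ∈ c j) ∧ ∀ j ∈ p.parts, j ∈ s} =
      coeff (R := α) n (∏ i ∈ s, indicatorSeries α ((· * i) '' c i)) := by
  simp_rw [coeff_prod, coeff_indicator, prod_boole, sum_boole]
  apply congr_arg
  simp only [mem_univ, forall_true_left, not_and, not_forall, exists_prop,
    Set.mem_image, not_exists]
  set φ : (a : Nat.Partition n) →
    a ∈ filter (fun p ↦ (∀ (j : ℕ), Multiset.count j p.parts ∈ c j) ∧ ∀ j ∈ p.parts, j ∈ s) univ →
    ℕ →₀ ℕ := fun p _ => {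
      toFun := fun i => Multiset.count i p.parts • i
      support := Finset.filter (fun i => i ≠ 0) p.parts.toFinset
      mem_support_toFun := fun a => by
        simp only [smul_eq_mul, ne_eq, mul_eq_zero, Multiset.count_eq_zero]
        rw [not_or, not_not]
        simp only [Multiset.mem_toFinset, not_not, mem_filter] }
  refine Finset.card_bij φ ?_ ?_ ?_
  · intro a ha
    simp only [φ, not_forall, not_exists, not_and, exists_prop, mem_filter]
    rw [mem_finsuppAntidiag]
    dsimp only [ne_eq, smul_eq_mul, id_eq, eq_mpr_eq_cast, le_eq_subset, Finsupp.coe_mk]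
    simp only [mem_univ, forall_true_left, not_and, not_forall, exists_prop,
      mem_filter, true_and] at ha
    refine ⟨⟨?_, fun i ↦ ?_⟩, fun i _ ↦ ⟨a.parts.count i, ha.1 i, rfl⟩⟩
    · conv_rhs => simp [← a.parts_sum]
      rw [sum_multiset_count_of_subset _ s]
      · simp only [smul_eq_mul]
      · intro i
        simp only [Multiset.mem_toFinset, not_not, mem_filter]
        apply ha.2
    · simp only [ne_eq, Multiset.mem_toFinset, not_not, mem_filter, and_imp]
      exact fun hi _ ↦ ha.2 i hi
  · intro p₁ hp₁ p₂ hp₂ h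
    apply Nat.Partition.ext
    simp only [true_and, mem_univ, mem_filter] at hp₁ hp₂
    ext i
    simp only [φ, ne_eq, Multiset.mem_toFinset, not_not, smul_eq_mul, Finsupp.mk.injEq] at h
    by_cases hi : i = 0
    · rw [hi]
      rw [Multiset.count_eq_zero_of_notMem]
      · rw [Multiset.count_eq_zero_of_notMem]
        intro a; exact Nat.lt_irrefl 0 (hs 0 (hp₂.2 0 a))
      intro a; exact Nat.lt_irrefl 0 (hs 0 (hp₁.2 0 a))
    · rw [← mul_left_inj' hi]
      rw [funext_iff] at h
      exact h.2 i
  · simp only [φ, mem_filter, mem_finsuppAntidiag, mem_univ, exists_prop, true_and, and_assoc]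
    rintro f ⟨hf, hf₃, hf₄⟩
    have hf' : f ∈ finsuppAntidiag s n := mem_finsuppAntidiag.mpr ⟨hf, hf₃⟩
    simp only [mem_finsuppAntidiag] at hf'
    refine ⟨⟨∑ i ∈ s, Multiset.replicate (f i / i) i, ?_, ?_⟩, ?_, ?_, ?_⟩
    · intro i hi
      simp only [exists_prop, Multiset.mem_sum, mem_map, Function.Embedding.coeFn_mk] at hi
      rcases hi with ⟨t, ht, z⟩
      apply hs
      rwa [Multiset.eq_of_mem_replicate z]
    · simp_rw [Multiset.sum_sum, Multiset.sum_replicate, Nat.nsmul_eq_mul]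
      rw [← hf'.1]
      refine sum_congr rfl fun i hi => Nat.div_mul_cancel ?_
      rcases hf₄ i hi with ⟨w, _, hw₂⟩
      rw [← hw₂]
      exact dvd_mul_left _ _
    · intro i
      simp_rw [Multiset.count_sum', Multiset.count_replicate, sum_ite_eq']
      split_ifs with h
      · rcases hf₄ i h with ⟨w, hw₁, hw₂⟩
        rwa [← hw₂, Nat.mul_div_cancel _ (hs i h)]
      · exact hc _ h
    · intro i hi
      rw [Multiset.mem_sum] at hi
      rcases hi with ⟨j, hj₁, hj₂⟩
      rwa [Multiset.eq_of_mem_replicate hj₂]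
    · ext i
      simp_rw [Multiset.count_sum', Multiset.count_replicate, sum_ite_eq']
      simp only [ne_eq, Multiset.mem_toFinset, not_not, smul_eq_mul, ite_mul,
        zero_mul, Finsupp.coe_mk]
      split_ifs with h
      · apply Nat.div_mul_cancel
        rcases hf₄ i h with ⟨w, _, hw₂⟩
        apply Dvd.intro_left _ hw₂
      · apply symm
        rw [← Finsupp.notMem_support_iff]
        exact notMem_mono hf'.2 h


/-! ### Low-coefficient congruence lemmas -/

variable {R : Type*} [CommRing R]

lemma coeff_prod_eq_one (N : ℕ) (s : Finset ι) (f : ι → PowerSeries R)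
    (h : ∀ i ∈ s, ∀ k ≤ N, coeff (R := R) k (f i) = coeff (R := R) k 1) :
    ∀ k ≤ N, coeff (R := R) k (∏ i ∈ s, f i) = coeff (R := R) k 1 := by
  induction s using Finset.cons_induction with
  | empty => simp
  | cons a s ha ih =>
    intro k hk
    rw [Finset.prod_cons, coeff_mul]
    calc (∑ p ∈ antidiagonal k, coeff (R := R) p.1 (f a) * coeff (R := R) p.2 (∏ i ∈ s, f i))
        = ∑ p ∈ antidiagonal k,
            coeff (R := R) p.1 (1 : PowerSeries R) * coeff (R := R) p.2 (1 : PowerSeries R) := by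
          refine Finset.sum_congr rfl fun p hp => ?_
          rw [h a (Finset.mem_cons_self a s) p.1 (le_trans (Finset.HasAntidiagonal.antidiagonal.fst_le hp) hk),
            ih (fun i hi => h i (Finset.mem_cons_of_mem hi)) p.2
              (le_trans (Finset.HasAntidiagonal.antidiagonal.snd_le hp) hk)]
      _ = coeff (R := R) k ((1 : PowerSeries R) * 1) := (coeff_mul _ _ _).symm
      _ = coeff (R := R) k 1 := by rw [mul_one]

lemma coeff_mul_eq_of_low (N : ℕ) (f g : PowerSeries R)
    (h : ∀ k ≤ N, coeff (R := R) k g = coeff (R := R) k 1) :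
    coeff (R := R) N (f * g) = coeff (R := R) N f := by
  rw [coeff_mul]
  calc (∑ p ∈ antidiagonal N, coeff (R := R) p.1 f * coeff (R := R) p.2 g)
      = ∑ p ∈ antidiagonal N, coeff (R := R) p.1 f * coeff (R := R) p.2 (1 : PowerSeries R) := by
        refine Finset.sum_congr rfl fun p hp => ?_
        rw [h p.2 (Finset.HasAntidiagonal.antidiagonal.snd_le hp)]
    _ = coeff (R := R) N (f * 1) := (coeff_mul _ _ _).symm
    _ = coeff (R := R) N f := by rw [mul_one]

/-! ### Series supported on multiples of 3, and contraction `X^3 ↦ X` -/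

def Supp3 (f : PowerSeries R) : Prop := ∀ k, ¬ (3 ∣ k) → coeff (R := R) k f = 0

def ctr (f : PowerSeries R) : PowerSeries R := PowerSeries.mk fun k => coeff (R := R) (3 * k) f

lemma coeff_ctr (f : PowerSeries R) (k : ℕ) : coeff (R := R) k (ctr f) = coeff (R := R) (3 * k) f :=
  coeff_mk _ _

lemma supp3_one : Supp3 (1 : PowerSeries R) := by
  intro k hk
  rw [coeff_one, if_neg]
  rintro rfl
  exact hk ⟨0, rfl⟩

lemma supp3_one_sub (j : ℕ) : Supp3 ((1 : PowerSeries R) - X ^ (3 * j)) := by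
  intro k hk
  rw [map_sub, coeff_one, coeff_X_pow, if_neg, if_neg, sub_zero]
  · rintro rfl; exact hk ⟨j, rfl⟩
  · rintro rfl; exact hk ⟨0, rfl⟩

lemma supp3_mul {f g : PowerSeries R} (hf : Supp3 f) (hg : Supp3 g) : Supp3 (f * g) := by
  intro k hk
  rw [coeff_mul]
  refine Finset.sum_eq_zero fun p hp => ?_
  by_cases h1 : 3 ∣ p.1
  · have h2 : ¬ 3 ∣ p.2 := by
      intro h2
      exact hk (Finset.HasAntidiagonal.mem_antidiagonal.mp hp ▸ Dvd.dvd.add h1 h2)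
    rw [hg _ h2, mul_zero]
  · rw [hf _ h1, zero_mul]

lemma ctr_one : ctr (1 : PowerSeries R) = 1 := by
  ext k
  rw [coeff_ctr, coeff_one, coeff_one]
  by_cases hk : k = 0 <;> simp [hk]

lemma ctr_one_sub (j : ℕ) : ctr ((1 : PowerSeries R) - X ^ (3 * j)) = 1 - X ^ j := by
  ext k
  rw [coeff_ctr, map_sub, map_sub, coeff_one, coeff_one, coeff_X_pow, coeff_X_pow]
  have h1 : (3 * k = 0) ↔ (k = 0) := by omega
  have h2 : (3 * k = 3 * j) ↔ (k = j) := by omega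
  rw [if_congr h1 rfl rfl, if_congr h2 rfl rfl]

lemma ctr_mul {f g : PowerSeries R} (hf : Supp3 f) (hg : Supp3 g) :
    ctr (f * g) = ctr f * ctr g := by
  ext k
  rw [coeff_ctr, coeff_mul, coeff_mul]
  have hinj : Function.Injective (fun p : ℕ × ℕ => (3 * p.1, 3 * p.2)) := by
    intro a b h
    simp only [Prod.mk.injEq] at h
    exact Prod.ext (by omega) (by omega)
  rw [show (∑ p ∈ antidiagonal k, coeff (R := R) p.1 (ctr f) * coeff (R := R) p.2 (ctr g))
      = ∑ p ∈ (antidiagonal k).map ⟨_, hinj⟩, coeff (R := R) p.1 f * coeff (R := R) p.2 g by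
    rw [Finset.sum_map]
    refine Finset.sum_congr rfl fun p _ => ?_
    simp only [Function.Embedding.coeFn_mk]
    rw [coeff_ctr, coeff_ctr]]
  refine (Finset.sum_subset ?_ ?_).symm
  · intro p hp
    rw [Finset.mem_map] at hp
    obtain ⟨⟨a, b⟩, hq, rfl⟩ := hp
    rw [HasAntidiagonal.mem_antidiagonal] at hq
    simp only [Function.Embedding.coeFn_mk, HasAntidiagonal.mem_antidiagonal]
    omega
  · intro p hp hnp
    rw [HasAntidiagonal.mem_antidiagonal] at hp
    by_cases h1 : 3 ∣ p.1
    · by_cases h2 : 3 ∣ p.2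
      · exfalso
        obtain ⟨a, ha⟩ := h1
        obtain ⟨b, hb⟩ := h2
        refine hnp (Finset.mem_map.mpr ⟨(a, b), HasAntidiagonal.mem_antidiagonal.mpr (by omega), ?_⟩)
        simp only [Function.Embedding.coeFn_mk]
        rw [← ha, ← hb]
      · rw [hg _ h2, mul_zero]
    · rw [hf _ h1, zero_mul]

lemma supp3_pow {f : PowerSeries R} (hf : Supp3 f) (m : ℕ) : Supp3 (f ^ m) := by
  induction m with
  | zero => simpa using supp3_one
  | succ m ih => rw [pow_succ]; exact supp3_mul ih hf

lemma ctr_pow {f : PowerSeries R} (hf : Supp3 f) (m : ℕ) : ctr (f ^ m) = ctr f ^ m := by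
  induction m with
  | zero => simpa using ctr_one
  | succ m ih => rw [pow_succ, ctr_mul (supp3_pow hf m) hf, ih, pow_succ]

lemma supp3_prod (s : Finset ι) (f : ι → PowerSeries R) (h : ∀ i ∈ s, Supp3 (f i)) :
    Supp3 (∏ i ∈ s, f i) := by
  induction s using Finset.cons_induction with
  | empty => simpa using supp3_one
  | cons a s ha ih =>
    rw [Finset.prod_cons]
    exact supp3_mul (h a (mem_cons_self a s)) (ih fun i hi => h i (mem_cons_of_mem hi))

lemma ctr_prod (s : Finset ι) (f : ι → PowerSeries R) (h : ∀ i ∈ s, Supp3 (f i)) :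
    ctr (∏ i ∈ s, f i) = ∏ i ∈ s, ctr (f i) := by
  induction s using Finset.cons_induction with
  | empty => simpa using ctr_one
  | cons a s ha ih =>
    rw [Finset.prod_cons, Finset.prod_cons,
      ctr_mul (h a (mem_cons_self a s)) (supp3_prod s f fun i hi => h i (mem_cons_of_mem hi)),
      ih fun i hi => h i (mem_cons_of_mem hi)]

/-! ### Characteristic 3 facts -/

instance : CharP (PowerSeries (ZMod 3)) 3 :=
  charP_of_injective_ringHom (f := PowerSeries.C (R := ZMod 3))
    (fun a b h => by simpa using congrArg (constantCoeff (R := ZMod 3)) h) 3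

lemma cube (i : ℕ) : ((1 : PowerSeries (ZMod 3)) - X ^ i) ^ 3 = 1 - X ^ (3 * i) := by
  haveI : Fact (Nat.Prime 3) := ⟨by norm_num⟩
  rw [sub_pow_char (1 : PowerSeries (ZMod 3)) (X ^ i) (p := 3), one_pow, ← pow_mul,
    mul_comm i 3]

lemma pow24 (i : ℕ) :
    ((1 : PowerSeries (ZMod 3)) - X ^ i) ^ 24 = (1 - X ^ (3 * i)) ^ 8 := by
  rw [show (24 : ℕ) = 3 * 8 from rfl, pow_mul, cube]

lemma pow9 (i : ℕ) :
    ((1 : PowerSeries (ZMod 3)) - X ^ i) ^ 9 = 1 - X ^ (9 * i) := by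
  rw [show (9 : ℕ) = 3 * 3 from rfl, pow_mul, cube, cube, ← mul_assoc]

/-! ### The `(1 - X^j)±1` products -/

lemma constCoeff_one_sub (m : ℕ) :
    constantCoeff (R := ZMod 3) (1 - X ^ (m + 1)) ≠ 0 := by
  simp

lemma prod_mul_inv (s : Finset ℕ) :
    (∏ m ∈ s, ((1 : PowerSeries (ZMod 3)) - X ^ (m + 1))) *
      (∏ m ∈ s, ((1 : PowerSeries (ZMod 3)) - X ^ (m + 1))⁻¹) = 1 := by
  rw [← Finset.prod_mul_distrib]
  refine Finset.prod_eq_one fun m _ => ?_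
  exact PowerSeries.mul_inv_cancel _ (constCoeff_one_sub m)

/-- The key coefficient identity: for `N ≤ M`, the `N`-th coefficient of
`∏_{m<M} (1-X^{m+1})^8` over `ZMod 3` equals the number of 9-regular partitions of `N`. -/
lemma coeff_prod8 (N M : ℕ) (hNM : N ≤ M) :
    coeff (R := ZMod 3) N (∏ m ∈ range M, ((1 : PowerSeries (ZMod 3)) - X ^ (m + 1)) ^ 8)
      = (regularPartitions 9 N : ZMod 3) := by
  set F8 := ∏ m ∈ range M, ((1 : PowerSeries (ZMod 3)) - X ^ (m + 1)) ^ 8 with hF8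
  set S : Finset ℕ := (range M).filter (fun m => ¬ 9 ∣ (m + 1)) with hS
  set S9 : Finset ℕ := (range M).filter (fun m => 9 ∣ (m + 1)) with hS9
  -- reindexing of S9 into range M
  set g : ℕ → ℕ := fun m => (m + 1) / 9 - 1 with hg
  have hg9 : ∀ m ∈ S9, 9 * (g m + 1) = m + 1 := by
    intro m hm
    rw [hS9, mem_filter] at hm
    obtain ⟨-, j, hj⟩ := hm
    have hj1 : 1 ≤ j := by omega
    simp only [hg, hj]
    omega
  have hginj : ∀ a ∈ S9, ∀ b ∈ S9, g a = g b → a = b := by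
    intro a ha b hb hab
    have h1 := hg9 a ha
    have h2 := hg9 b hb
    omega
  set T : Finset ℕ := S9.image g with hT
  have hTsub : T ⊆ range M := by
    intro t ht
    rw [hT, mem_image] at ht
    obtain ⟨m, hm, rfl⟩ := ht
    have h1 := hg9 m hm
    rw [hS9, mem_filter, mem_range] at hm
    rw [mem_range]
    omega
  -- the product over S9 equals the product over T of the 9-fold factors
  have hS9T : (∏ m ∈ S9, ((1 : PowerSeries (ZMod 3)) - X ^ (m + 1)))
      = ∏ t ∈ T, ((1 : PowerSeries (ZMod 3)) - X ^ (9 * (t + 1))) := by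
    rw [hT, Finset.prod_image hginj]
    exact Finset.prod_congr rfl fun m hm => by rw [hg9 m hm]
  -- split the 9-fold product
  have hsplit : (∏ m ∈ range M, ((1 : PowerSeries (ZMod 3)) - X ^ (9 * (m + 1))))
      = (∏ m ∈ range M \ T, ((1 : PowerSeries (ZMod 3)) - X ^ (9 * (m + 1)))) *
        (∏ t ∈ T, ((1 : PowerSeries (ZMod 3)) - X ^ (9 * (t + 1)))) :=
    (Finset.prod_sdiff hTsub).symm
  -- the leftover factors only involve exponents > N
  have hK : ∀ k ≤ N, coeff (R := ZMod 3) k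
      (∏ m ∈ range M \ T, ((1 : PowerSeries (ZMod 3)) - X ^ (9 * (m + 1))))
      = coeff (R := ZMod 3) k 1 := by
    refine coeff_prod_eq_one N _ _ fun m hm k hk => ?_
    have hbig : N < 9 * (m + 1) := by
      by_contra hle
      push_neg at hle
      rw [Finset.mem_sdiff] at hm
      refine hm.2 ?_
      have h9m : 9 * (m + 1) - 1 ∈ S9 := by
        rw [hS9, mem_filter, mem_range]
        constructor
        · omega
        · exact ⟨m + 1, by omega⟩
      rw [hT, mem_image]
      exact ⟨9 * (m + 1) - 1, h9m, by simp only [hg]; omega⟩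
    rw [map_sub, coeff_X_pow, if_neg (by omega), sub_zero]
  -- F8 * F1 = the 9-fold product
  have hmul9 : F8 * (∏ m ∈ range M, ((1 : PowerSeries (ZMod 3)) - X ^ (m + 1)))
      = ∏ m ∈ range M, ((1 : PowerSeries (ZMod 3)) - X ^ (9 * (m + 1))) := by
    rw [hF8, ← Finset.prod_mul_distrib]
    refine Finset.prod_congr rfl fun m _ => ?_
    rw [← pow_succ, pow9]
  -- hence F8 = 9-fold product * inverses
  have hF8eq : F8 = (∏ m ∈ range M, ((1 : PowerSeries (ZMod 3)) - X ^ (9 * (m + 1)))) *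
      (∏ m ∈ range M, ((1 : PowerSeries (ZMod 3)) - X ^ (m + 1))⁻¹) := by
    rw [← hmul9, mul_assoc, prod_mul_inv, mul_one]
  -- split the inverses over S and S9
  have hinvsplit : (∏ m ∈ range M, ((1 : PowerSeries (ZMod 3)) - X ^ (m + 1))⁻¹)
      = (∏ m ∈ S9, ((1 : PowerSeries (ZMod 3)) - X ^ (m + 1))⁻¹) *
        (∏ m ∈ S, ((1 : PowerSeries (ZMod 3)) - X ^ (m + 1))⁻¹) := by
    rw [hS, hS9]
    exact (Finset.prod_filter_mul_prod_filter_not (range M) (fun m => 9 ∣ (m + 1)) _).symm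
  have hS9cancel : (∏ t ∈ T, ((1 : PowerSeries (ZMod 3)) - X ^ (9 * (t + 1)))) *
      (∏ m ∈ S9, ((1 : PowerSeries (ZMod 3)) - X ^ (m + 1))⁻¹) = 1 := by
    rw [← hS9T]
    exact prod_mul_inv S9
  have hF8final : F8 = (∏ m ∈ S, ((1 : PowerSeries (ZMod 3)) - X ^ (m + 1))⁻¹) *
      (∏ m ∈ range M \ T, ((1 : PowerSeries (ZMod 3)) - X ^ (9 * (m + 1)))) := by
    rw [hF8eq, hsplit, hinvsplit,
      show ∀ a b c d : PowerSeries (ZMod 3), a * b * (c * d) = d * (a * (b * c)) from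
        fun a b c d => by ring,
      hS9cancel, mul_one]
  rw [hF8final, coeff_mul_eq_of_low N _ _ hK]
  -- now the partition generating function
  set s : Finset ℕ := S.image (fun m => m + 1) with hs
  have hsinj : ∀ a ∈ S, ∀ b ∈ S, a + 1 = b + 1 → a = b := fun a _ b _ h => by omega
  have hprod : (∏ m ∈ S, ((1 : PowerSeries (ZMod 3)) - X ^ (m + 1))⁻¹)
      = ∏ i ∈ s, indicatorSeries (ZMod 3) ((· * i) '' Set.univ) := by
    rw [hs, Finset.prod_image hsinj]
    refine Finset.prod_congr rfl fun m _ => ?_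
    have hset : ((· * (m + 1)) '' Set.univ : Set ℕ) = {k | (m + 1) ∣ k} := by
      ext k
      constructor
      · rintro ⟨c, -, rfl⟩; exact ⟨c, by ring⟩
      · rintro ⟨c, rfl⟩; exact ⟨c, trivial, by ring⟩
    rw [num_series', hset]
  rw [hprod]
  have hpos : ∀ i ∈ s, 0 < i := by
    intro i hi
    rw [hs, mem_image] at hi
    obtain ⟨m, -, rfl⟩ := hi
    omega
  rw [← partialGF_prop (ZMod 3) N s hpos (fun _ => Set.univ) (fun _ _ => trivial)]
  congr 1
  -- identify the two partition counts
  rw [regularPartitions, Nat.card_eq_fintype_card, Fintype.card_subtype]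
  congr 1
  refine Finset.filter_congr fun p _ => ?_
  have hmem : ∀ j ∈ p.parts, (j ∈ s ↔ ¬ 9 ∣ j) := by
    intro j hj
    have hj1 : 0 < j := p.parts_pos hj
    have hjN : j ≤ N := by
      have := Multiset.single_le_sum (fun a _ => Nat.zero_le a) j hj
      rwa [p.parts_sum] at this
    rw [hs, mem_image]
    constructor
    · rintro ⟨m, hm, rfl⟩
      rw [hS, mem_filter] at hm
      exact hm.2
    · intro h9
      refine ⟨j - 1, ?_, by omega⟩
      rw [hS, mem_filter, mem_range]
      constructor
      · omega
      · rwa [show j - 1 + 1 = j by omega]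
  constructor
  · rintro ⟨-, h2⟩ j hj
    exact (hmem j hj).mp (h2 j hj)
  · intro h
    exact ⟨fun j => trivial, fun j hj => (hmem j hj).mpr (h j hj)⟩

end

end RamanujanAux

open RamanujanAux in
/-- If `3 ∣ n` then `τ(n+1) ≡ R₉(n/3) (mod 3)`, and otherwise `τ(n+1) ≡ 0 (mod 3)`.
Here `τ = τ₂₄` is Ramanujan's tau function. -/
theorem ramanujanTau_modEq_three (n : ℕ) (hn : 0 < n) :
    (3 ∣ n → tau 24 (n + 1) ≡ (regularPartitions 9 (n / 3) : ℤ) [ZMOD 3]) ∧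
    (¬ 3 ∣ n → tau 24 (n + 1) ≡ 0 [ZMOD 3]) := by
  have htau : tau 24 (n + 1)
      = coeff (R := ℤ) n (∏ m ∈ range (n + 1), ((1 : PowerSeries ℤ) - X ^ (m + 1)) ^ 24) := by
    unfold tau
    rw [Nat.add_sub_cancel,
      show ((↑(∏ m ∈ Finset.range (n + 1), (isUnit_one_sub_X_pow m).unit ^ (24 : ℤ)) :
          PowerSeries ℤ))
        = Units.coeHom (PowerSeries ℤ)
            (∏ m ∈ Finset.range (n + 1), (isUnit_one_sub_X_pow m).unit ^ (24 : ℤ)) from rfl,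
      map_prod]
    refine congrArg _ (Finset.prod_congr rfl fun m _ => ?_)
    rw [Units.coeHom_apply, show (24 : ℤ) = ((24 : ℕ) : ℤ) by norm_num, zpow_natCast,
      Units.val_pow_eq_pow_val, IsUnit.unit_spec]
  have hcast : ((tau 24 (n + 1) : ℤ) : ZMod 3)
      = coeff (R := ZMod 3) n (∏ m ∈ range (n + 1), ((1 : PowerSeries (ZMod 3)) - X ^ (m + 1)) ^ 24) := by
    rw [htau,
      show (((coeff (R := ℤ) n) (∏ m ∈ range (n + 1), ((1 : PowerSeries ℤ) - X ^ (m + 1)) ^ 24) : ℤ) :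
          ZMod 3)
        = (Int.castRingHom (ZMod 3))
            ((coeff (R := ℤ) n) (∏ m ∈ range (n + 1), ((1 : PowerSeries ℤ) - X ^ (m + 1)) ^ 24)) from
        rfl,
      ← PowerSeries.coeff_map]
    congr 1
    rw [map_prod]
    refine Finset.prod_congr rfl fun m _ => ?_
    rw [map_pow, map_sub, map_one, map_pow, PowerSeries.map_X]
  have h24 : (∏ m ∈ range (n + 1), ((1 : PowerSeries (ZMod 3)) - X ^ (m + 1)) ^ 24)
      = ∏ m ∈ range (n + 1), ((1 : PowerSeries (ZMod 3)) - X ^ (3 * (m + 1))) ^ 8 :=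
    Finset.prod_congr rfl fun m _ => pow24 (m + 1)
  have hsupp : ∀ m ∈ range (n + 1),
      Supp3 (((1 : PowerSeries (ZMod 3)) - X ^ (3 * (m + 1))) ^ 8) :=
    fun m _ => supp3_pow (supp3_one_sub (m + 1)) 8
  constructor
  · intro h3
    obtain ⟨N, rfl⟩ := h3
    refine (ZMod.intCast_eq_intCast_iff _ _ 3).mp ?_
    push_cast
    rw [hcast, h24]
    have h3N : 3 * N / 3 = N := by omega
    rw [h3N, show (3 * N) = 3 * N from rfl, ← coeff_ctr,
      ctr_prod (range (3 * N + 1)) _ hsupp,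
      show (∏ m ∈ range (3 * N + 1), ctr (((1 : PowerSeries (ZMod 3)) - X ^ (3 * (m + 1))) ^ 8))
        = ∏ m ∈ range (3 * N + 1), ((1 : PowerSeries (ZMod 3)) - X ^ (m + 1)) ^ 8 from
        Finset.prod_congr rfl fun m _ => by
          rw [ctr_pow (supp3_one_sub (m + 1)) 8, ctr_one_sub],
      coeff_prod8 N (3 * N + 1) (by omega)]
  · intro h3
    refine (ZMod.intCast_eq_intCast_iff _ _ 3).mp ?_
    push_cast
    rw [hcast, h24]
    exact supp3_prod _ _ hsupp n h3
end

section
/- Let n be a positive integer. Then τ(n+1) ≡ R_{25}(n) (mod 5). -/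
open PowerSeries Finset

/-! ### Auxiliary generating-function machinery (adapted from the Archive partition file) -/

namespace RamAux

open scoped Classical

variable {α : Type*}

/-- A convenience constructor for the power series whose coefficients indicate a subset. -/
noncomputable def indicatorSeries (α : Type*) [Semiring α] (s : Set ℕ) : PowerSeries α :=
  PowerSeries.mk fun n => if n ∈ s then 1 else 0

theorem coeff_indicator (s : Set ℕ) [Semiring α] (n : ℕ) :
    coeff (R := α) n (indicatorSeries _ s) = if n ∈ s then 1 else 0 :=
  coeff_mk _ _

theorem constantCoeff_indicator (s : Set ℕ) [Semiring α] :
    constantCoeff (R := α) (indicatorSeries _ s) = if 0 ∈ s then 1 else 0 :=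
  rfl

theorem num_series' [Field α] (i : ℕ) :
    (1 - (X : PowerSeries α) ^ (i + 1))⁻¹ = indicatorSeries α {k | i + 1 ∣ k} := by
  rw [PowerSeries.inv_eq_iff_mul_eq_one]
  · ext n
    cases n with
    | zero => simp [mul_sub, zero_pow, constantCoeff_indicator]
    | succ n =>
      simp only [coeff_one, if_false, mul_sub, mul_one, coeff_indicator,
        LinearMap.map_sub, reduceCtorEq]
      simp_rw [coeff_mul, coeff_X_pow, coeff_indicator, @boole_mul _ _ _ _]
      erw [@sum_ite _ _ _ _ _ (fun _ => Classical.propDecidable _), sum_ite]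
      simp_rw [@filter_filter _ _ _ _ _, sum_const_zero, add_zero, sum_const, nsmul_eq_mul, mul_one,
        sub_eq_iff_eq_add, zero_add]
      symm
      split_ifs with h
      · suffices #{a ∈ antidiagonal (n + 1) | i + 1 ∣ a.fst ∧ a.snd = i + 1} = 1 by
          simp only [Set.mem_setOf_eq]; convert congr_arg ((↑) : ℕ → α) this; norm_cast
        rw [card_eq_one]
        cases' h with p hp
        refine ⟨((i + 1) * (p - 1), i + 1), ?_⟩
        ext ⟨a₁, a₂⟩
        simp only [mem_filter, Prod.mk.injEq, Finset.HasAntidiagonal.mem_antidiagonal, mem_singleton]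
        constructor
        · rintro ⟨a_left, ⟨a, rfl⟩, rfl⟩
          refine ⟨?_, rfl⟩
          rw [Nat.mul_sub_left_distrib, ← hp, ← a_left, mul_one, Nat.add_sub_cancel]
        · rintro ⟨rfl, rfl⟩
          match p with
          | 0 => rw [mul_zero] at hp; cases hp
          | p + 1 => rw [hp]; simp [mul_add]
      · suffices #{a ∈ antidiagonal (n + 1) | i + 1 ∣ a.fst ∧ a.snd = i + 1} = 0 by
          simp only [Set.mem_setOf_eq]; convert congr_arg ((↑) : ℕ → α) this; norm_cast
        rw [card_eq_zero]
        apply eq_empty_of_forall_notMem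
        simp only [Prod.forall, mem_filter, not_and, Finset.HasAntidiagonal.mem_antidiagonal]
        rintro _ h₁ h₂ ⟨a, rfl⟩ rfl
        apply h
        simp [← h₂]
  · simp [zero_pow]

-- The main workhorse of the partition theorem proof.
theorem partialGF_prop (α : Type*) [CommSemiring α] (n : ℕ) (s : Finset ℕ) (hs : ∀ i ∈ s, 0 < i)
    (c : ℕ → Set ℕ) (hc : ∀ i, i ∉ s → 0 ∈ c i) :
    #{p : n.Partition | (∀ j, p.parts.count j ∈ c j) ∧ ∀ j ∈ p.parts, j ∈ s} =
      coeff (R := α) n (∏ i ∈ s, indicatorSeries α ((· * i) '' c i)) := by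
  simp_rw [coeff_prod, coeff_indicator, prod_boole, sum_boole]
  apply congr_arg
  simp only [mem_univ, forall_true_left, not_and, not_forall, exists_prop,
    Set.mem_image, not_exists]
  set φ : (a : Nat.Partition n) →
    a ∈ filter (fun p ↦ (∀ (j : ℕ), Multiset.count j p.parts ∈ c j) ∧ ∀ j ∈ p.parts, j ∈ s) univ →
    ℕ →₀ ℕ := fun p _ => {
      toFun := fun i => Multiset.count i p.parts • i
      support := Finset.filter (fun i => i ≠ 0) p.parts.toFinset
      mem_support_toFun := fun a => by
        simp only [smul_eq_mul, ne_eq, mul_eq_zero, Multiset.count_eq_zero]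
        rw [not_or, not_not]
        simp only [Multiset.mem_toFinset, not_not, mem_filter] }
  refine Finset.card_bij φ ?_ ?_ ?_
  · intro a ha
    simp only [φ, not_forall, not_exists, not_and, exists_prop, mem_filter]
    rw [mem_finsuppAntidiag]
    dsimp only [ne_eq, smul_eq_mul, id_eq, eq_mpr_eq_cast, le_eq_subset, Finsupp.coe_mk]
    simp only [mem_univ, forall_true_left, not_and, not_forall, exists_prop,
      mem_filter, true_and] at ha
    refine ⟨⟨?_, fun i ↦ ?_⟩, fun i _ ↦ ⟨a.parts.count i, ha.1 i, rfl⟩⟩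
    · conv_rhs => simp [← a.parts_sum]
      rw [sum_multiset_count_of_subset _ s]
      · simp only [smul_eq_mul]
      · intro i
        simp only [Multiset.mem_toFinset, not_not, mem_filter]
        apply ha.2
    · simp only [ne_eq, Multiset.mem_toFinset, not_not, mem_filter, and_imp]
      exact fun hi _ ↦ ha.2 i hi
  · intro p₁ hp₁ p₂ hp₂ h
    apply Nat.Partition.ext
    simp only [true_and, mem_univ, mem_filter] at hp₁ hp₂
    ext i
    simp only [φ, ne_eq, Multiset.mem_toFinset, not_not, smul_eq_mul, Finsupp.mk.injEq] at h
    by_cases hi : i = 0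
    · rw [hi]
      rw [Multiset.count_eq_zero_of_notMem]
      · rw [Multiset.count_eq_zero_of_notMem]
        intro a; exact Nat.lt_irrefl 0 (hs 0 (hp₂.2 0 a))
      intro a; exact Nat.lt_irrefl 0 (hs 0 (hp₁.2 0 a))
    · rw [← mul_left_inj' hi]
      rw [funext_iff] at h
      exact h.2 i
  · simp only [φ, mem_filter, mem_finsuppAntidiag, mem_univ, exists_prop, true_and, and_assoc]
    rintro f ⟨hf, hf₃, hf₄⟩
    have hf' : f ∈ finsuppAntidiag s n := mem_finsuppAntidiag.mpr ⟨hf, hf₃⟩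
    simp only [mem_finsuppAntidiag] at hf'
    refine ⟨⟨∑ i ∈ s, Multiset.replicate (f i / i) i, ?_, ?_⟩, ?_, ?_, ?_⟩
    · intro i hi
      simp only [exists_prop, Multiset.mem_sum, mem_map, Function.Embedding.coeFn_mk] at hi
      rcases hi with ⟨t, ht, z⟩
      apply hs
      rwa [Multiset.eq_of_mem_replicate z]
    · simp_rw [Multiset.sum_sum, Multiset.sum_replicate, Nat.nsmul_eq_mul]
      rw [← hf'.1]
      refine sum_congr rfl fun i hi => Nat.div_mul_cancel ?_
      rcases hf₄ i hi with ⟨w, _, hw₂⟩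
      rw [← hw₂]
      exact dvd_mul_left _ _
    · intro i
      simp_rw [Multiset.count_sum', Multiset.count_replicate, sum_ite_eq']
      split_ifs with h
      · rcases hf₄ i h with ⟨w, hw₁, hw₂⟩
        rwa [← hw₂, Nat.mul_div_cancel _ (hs i h)]
      · exact hc _ h
    · intro i hi
      rw [Multiset.mem_sum] at hi
      rcases hi with ⟨j, hj₁, hj₂⟩
      rwa [Multiset.eq_of_mem_replicate hj₂]
    · ext i
      simp_rw [Multiset.count_sum', Multiset.count_replicate, sum_ite_eq']
      simp only [ne_eq, Multiset.mem_toFinset, not_not, smul_eq_mul, ite_mul,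
        zero_mul, Finsupp.coe_mk]
      split_ifs with h
      · apply Nat.div_mul_cancel
        rcases hf₄ i h with ⟨w, _, hw₂⟩
        apply Dvd.intro_left _ hw₂
      · apply symm
        rw [← Finsupp.notMem_support_iff]
        exact notMem_mono hf'.2 h

/-- Characteristic of a power series ring. -/
instance instCharP (R : Type*) [Semiring R] (p : ℕ) [CharP R p] :
    CharP (PowerSeries R) p := by
  constructor
  intro x
  rw [← map_natCast (PowerSeries.C (R := R)) x,
    map_eq_zero_iff (PowerSeries.C (R := R)) PowerSeries.C_injective,
    CharP.cast_eq_zero_iff R p x]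

theorem one_sub_X_pow_25 (i : ℕ) :
    (1 - (X : PowerSeries (ZMod 5)) ^ i) ^ 25 = 1 - X ^ (25 * i) := by
  haveI : Fact (Nat.Prime 5) := ⟨by norm_num⟩
  have h5 : ∀ j : ℕ, (1 - (X : PowerSeries (ZMod 5)) ^ j) ^ 5 = 1 - X ^ (5 * j) := by
    intro j
    rw [sub_pow_char, one_pow, ← pow_mul, mul_comm]
  calc (1 - (X : PowerSeries (ZMod 5)) ^ i) ^ 25
      = ((1 - (X : PowerSeries (ZMod 5)) ^ i) ^ 5) ^ 5 := by ring
    _ = (1 - (X : PowerSeries (ZMod 5)) ^ (5 * i)) ^ 5 := by rw [h5]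
    _ = 1 - X ^ (5 * (5 * i)) := h5 _
    _ = 1 - X ^ (25 * i) := by rw [← mul_assoc]; norm_num

end RamAux

open RamAux

/-- `τ(n+1) ≡ R₂₅(n) (mod 5)`, where `τ = τ₂₄` is Ramanujan's tau function. -/
theorem ramanujanTau_modEq_regularPartitions_25 (n : ℕ) (hn : 0 < n) :
    tau 24 (n + 1) ≡ (regularPartitions 25 n : ℤ) [ZMOD 5] := by
  classical
  haveI : Fact (Nat.Prime 5) := ⟨by norm_num⟩
  have cast5 : ((5 : ℕ) : ℤ) = 5 := by norm_cast
  rw [← cast5, ← ZMod.intCast_eq_intCast_iff]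
  push_cast
  -- Step 1: unfold tau
  have htau : tau 24 (n + 1) =
      PowerSeries.coeff (R := ℤ) n (∏ m ∈ Finset.range (n + 1), (1 - X ^ (m + 1)) ^ 24) := by
    rw [tau]
    congr 1
    rw [← Units.coeHom_apply, map_prod]
    refine Finset.prod_congr rfl fun m _ => ?_
    rw [show (24 : ℤ) = ((24 : ℕ) : ℤ) from rfl, zpow_natCast]
    simp [Units.coeHom_apply, (isUnit_one_sub_X_pow m).unit_spec]
  rw [htau]
  -- Step 2: cast to ZMod 5
  have hmap : PowerSeries.map (Int.castRingHom (ZMod 5))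
      (∏ m ∈ Finset.range (n + 1), (1 - X ^ (m + 1)) ^ 24) =
      ∏ m ∈ Finset.range (n + 1), (1 - (X : PowerSeries (ZMod 5)) ^ (m + 1)) ^ 24 := by
    rw [map_prod]
    refine Finset.prod_congr rfl fun m _ => ?_
    rw [map_pow, map_sub, map_one, map_pow, PowerSeries.map_X]
  rw [show ((PowerSeries.coeff (R := ℤ) n (∏ m ∈ Finset.range (n + 1), (1 - X ^ (m + 1)) ^ 24) : ℤ) :
        ZMod 5) =
      PowerSeries.coeff (R := ZMod 5) n (∏ m ∈ Finset.range (n + 1),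
        (1 - (X : PowerSeries (ZMod 5)) ^ (m + 1)) ^ 24) by
    rw [← hmap, PowerSeries.coeff_map]
    rfl]
  -- Step 3: algebra over ZMod 5
  set S : Finset ℕ := (Finset.range (n + 1)).image (· + 1) with hSdef
  have hS : ∀ i, i ∈ S ↔ 0 < i ∧ i ≤ n + 1 := by
    intro i
    simp only [hSdef, Finset.mem_image, Finset.mem_range]
    constructor
    · rintro ⟨a, ha, rfl⟩; omega
    · rintro ⟨h1, h2⟩; exact ⟨i - 1, by omega, by omega⟩
  have hinj : ∀ x ∈ Finset.range (n + 1), ∀ y ∈ Finset.range (n + 1), x + 1 = y + 1 → x = y := by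
    omega
  rw [show ∏ m ∈ Finset.range (n + 1), (1 - (X : PowerSeries (ZMod 5)) ^ (m + 1)) ^ 24 =
      ∏ i ∈ S, (1 - (X : PowerSeries (ZMod 5)) ^ i) ^ 24 by
    rw [hSdef, Finset.prod_image hinj]]
  set A : Finset ℕ := S.filter (fun i => ¬ 25 ∣ i) with hAdef
  set B : Finset ℕ := S.filter (fun i => 25 ∣ i) with hBdef
  set S₁ : Finset ℕ := S.filter (fun i => 25 * i ≤ n + 1) with hS1def
  set S₂ : Finset ℕ := S.filter (fun i => ¬ 25 * i ≤ n + 1) with hS2def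
  have hApos : ∀ i ∈ A, 0 < i := fun i hi => ((hS i).1 (Finset.mem_filter.1 hi).1).1
  have hconst : ∀ i : ℕ, 0 < i →
      PowerSeries.constantCoeff (R := ZMod 5) (1 - X ^ i) ≠ 0 := by
    intro i hi
    rw [map_sub, map_one, map_pow, constantCoeff_X, zero_pow hi.ne', sub_zero]
    exact one_ne_zero
  have hAinv : (∏ i ∈ A, (1 - (X : PowerSeries (ZMod 5)) ^ i)) *
      (∏ i ∈ A, (1 - (X : PowerSeries (ZMod 5)) ^ i)⁻¹) = 1 := by
    rw [← Finset.prod_mul_distrib,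
      Finset.prod_congr rfl fun i hi => PowerSeries.mul_inv_cancel _ (hconst i (hApos i hi))]
    exact Finset.prod_const_one
  have hmain : (∏ i ∈ S, (1 - (X : PowerSeries (ZMod 5)) ^ i) ^ 24) *
      ∏ i ∈ S, (1 - (X : PowerSeries (ZMod 5)) ^ i) =
      ∏ i ∈ S, (1 - (X : PowerSeries (ZMod 5)) ^ (25 * i)) := by
    rw [← Finset.prod_mul_distrib]
    refine Finset.prod_congr rfl fun i _ => ?_
    rw [← one_sub_X_pow_25]
    ring
  have hbij : ∏ i ∈ S₁, (1 - (X : PowerSeries (ZMod 5)) ^ (25 * i)) =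
      ∏ j ∈ B, (1 - (X : PowerSeries (ZMod 5)) ^ j) := by
    refine Finset.prod_nbij' (fun i => 25 * i) (fun j => j / 25) ?_ ?_ ?_ ?_ ?_
    · intro a ha
      rw [hS1def, Finset.mem_filter, hS a] at ha
      rw [hBdef, Finset.mem_filter, hS (25 * a)]
      exact ⟨⟨by omega, ha.2⟩, ⟨a, rfl⟩⟩
    · intro b hb
      rw [hBdef, Finset.mem_filter, hS b] at hb
      obtain ⟨⟨hb1, hb2⟩, k, rfl⟩ := hb
      rw [hS1def, Finset.mem_filter, hS (25 * k / 25)]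
      refine ⟨⟨by omega, by omega⟩, by omega⟩
    · intro a _; omega
    · intro b hb
      rw [hBdef, Finset.mem_filter] at hb
      obtain ⟨-, k, rfl⟩ := hb
      omega
    · intro a _; rfl
  have hsplitS : ∀ g : ℕ → PowerSeries (ZMod 5),
      ∏ i ∈ S, g i = (∏ i ∈ B, g i) * ∏ i ∈ A, g i := fun g =>
    (Finset.prod_filter_mul_prod_filter_not S (fun i => 25 ∣ i) g).symm
  have hsplitS' : ∀ g : ℕ → PowerSeries (ZMod 5),
      ∏ i ∈ S, g i = (∏ i ∈ S₁, g i) * ∏ i ∈ S₂, g i := fun g =>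
    (Finset.prod_filter_mul_prod_filter_not S (fun i => 25 * i ≤ n + 1) g).symm
  have hBne : (∏ j ∈ B, (1 - (X : PowerSeries (ZMod 5)) ^ j)) ≠ 0 := by
    rw [Finset.prod_ne_zero_iff]
    intro j hj h0
    exact hconst j ((hS j).1 (Finset.mem_filter.1 hj).1).1 (by rw [h0]; simp)
  have hcancel : (∏ i ∈ S, (1 - (X : PowerSeries (ZMod 5)) ^ i) ^ 24) *
      ∏ i ∈ A, (1 - (X : PowerSeries (ZMod 5)) ^ i) =
      ∏ i ∈ S₂, (1 - (X : PowerSeries (ZMod 5)) ^ (25 * i)) := by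
    apply mul_right_cancel₀ hBne
    calc (∏ i ∈ S, (1 - (X : PowerSeries (ZMod 5)) ^ i) ^ 24) *
          (∏ i ∈ A, (1 - (X : PowerSeries (ZMod 5)) ^ i)) *
          (∏ j ∈ B, (1 - (X : PowerSeries (ZMod 5)) ^ j))
        = (∏ i ∈ S, (1 - (X : PowerSeries (ZMod 5)) ^ i) ^ 24) *
          ((∏ j ∈ B, (1 - (X : PowerSeries (ZMod 5)) ^ j)) *
          (∏ i ∈ A, (1 - (X : PowerSeries (ZMod 5)) ^ i))) := by ring
      _ = ∏ i ∈ S, (1 - (X : PowerSeries (ZMod 5)) ^ (25 * i)) := by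
          rw [← hsplitS, hmain]
      _ = (∏ i ∈ S₁, (1 - (X : PowerSeries (ZMod 5)) ^ (25 * i))) *
          ∏ i ∈ S₂, (1 - (X : PowerSeries (ZMod 5)) ^ (25 * i)) := hsplitS' _
      _ = (∏ i ∈ S₂, (1 - (X : PowerSeries (ZMod 5)) ^ (25 * i))) *
          ∏ j ∈ B, (1 - (X : PowerSeries (ZMod 5)) ^ j) := by rw [hbij]; ring
  have hFG : (∏ i ∈ S, (1 - (X : PowerSeries (ZMod 5)) ^ i) ^ 24) =
      (∏ i ∈ A, (1 - (X : PowerSeries (ZMod 5)) ^ i)⁻¹) *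
      ∏ i ∈ S₂, (1 - (X : PowerSeries (ZMod 5)) ^ (25 * i)) := by
    calc (∏ i ∈ S, (1 - (X : PowerSeries (ZMod 5)) ^ i) ^ 24)
        = (∏ i ∈ S, (1 - (X : PowerSeries (ZMod 5)) ^ i) ^ 24) *
          ((∏ i ∈ A, (1 - (X : PowerSeries (ZMod 5)) ^ i)) *
           (∏ i ∈ A, (1 - (X : PowerSeries (ZMod 5)) ^ i)⁻¹)) := by rw [hAinv, mul_one]
      _ = ((∏ i ∈ S, (1 - (X : PowerSeries (ZMod 5)) ^ i) ^ 24) *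
           (∏ i ∈ A, (1 - (X : PowerSeries (ZMod 5)) ^ i))) *
           (∏ i ∈ A, (1 - (X : PowerSeries (ZMod 5)) ^ i)⁻¹) := by ring
      _ = _ := by rw [hcancel]; ring
  rw [hFG, show ∏ i ∈ S₂, (1 - (X : PowerSeries (ZMod 5)) ^ (25 * i)) =
      ∏ i ∈ S₂, (1 - (X : PowerSeries (ZMod 5)) ^ (25 * i)) from rfl]
  rw [PowerSeries.coeff_mul_prod_one_sub_of_lt_order n S₂ _ (fun i => X ^ (25 * i))
    (by
      intro i hi
      rw [PowerSeries.order_X_pow]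
      rw [hS2def, Finset.mem_filter] at hi
      exact_mod_cast Nat.lt_of_lt_of_le (by omega) (le_refl (25 * i)))]
  -- Step 4: counting
  have hcount := partialGF_prop (ZMod 5) n A hApos (fun _ => Set.univ) (fun _ _ => trivial)
  have hind : ∀ i ∈ A, indicatorSeries (ZMod 5) ((· * i) '' Set.univ) =
      (1 - (X : PowerSeries (ZMod 5)) ^ i)⁻¹ := by
    intro i hi
    obtain ⟨j, rfl⟩ : ∃ j, j + 1 = i := ⟨i - 1, by have := hApos i hi; omega⟩
    have himg : ((· * (j + 1)) '' Set.univ : Set ℕ) = {k | j + 1 ∣ k} := by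
      ext k
      constructor
      · rintro ⟨m, -, rfl⟩; exact Dvd.intro_left m rfl
      · rintro ⟨m, rfl⟩; exact ⟨m, trivial, mul_comm _ _⟩
    rw [himg, num_series']
  rw [Finset.prod_congr rfl hind] at hcount
  rw [← hcount]
  -- identify the two counts
  have hcard : regularPartitions 25 n =
      #{p : n.Partition | (∀ j, p.parts.count j ∈ (Set.univ : Set ℕ)) ∧
        ∀ j ∈ p.parts, j ∈ A} := by
    rw [regularPartitions, Nat.card_eq_fintype_card, Fintype.card_subtype]
    congr 1
    apply Finset.filter_congr
    intro p _
    constructor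
    · intro h
      refine ⟨fun j => trivial, fun j hj => ?_⟩
      rw [hAdef, Finset.mem_filter, hS j]
      have hj1 : 0 < j := p.parts_pos hj
      have hj2 : j ≤ n := by
        simpa [p.parts_sum] using Multiset.single_le_sum (fun _ _ => Nat.zero_le _) _ hj
      exact ⟨⟨hj1, by omega⟩, h j hj⟩
    · intro h j hj
      have := h.2 j hj
      rw [hAdef, Finset.mem_filter] at this
      exact this.2
  rw [hcard]
end

section
/- Let n be a positive integer. Then τ(n+1) ≡ Σ (-1)^{m+r} (2m+1)(2r+1) (mod 7), where the sum runs over all pairs of nonnegative integers (m, r) with n = m(m+1)/2 + 7·r(r+1)/2. -/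
open Polynomial Finset

/-- Gaussian binomial coefficients as integer polynomials. -/
noncomputable def gb : ℕ → ℕ → Polynomial ℤ
  | _, 0 => 1
  | 0, _ + 1 => 0
  | m + 1, k + 1 => gb m (k + 1) + X ^ (m - k) * gb m k

@[simp] lemma gb_zero_right (m : ℕ) : gb m 0 = 1 := by cases m <;> rfl

lemma gb_succ_succ (m k : ℕ) :
    gb (m + 1) (k + 1) = gb m (k + 1) + X ^ (m - k) * gb m k := rfl

lemma gb_eq_zero : ∀ {m k : ℕ}, m < k → gb m k = 0 := by
  intro m
  induction m with
  | zero => intro k hk; match k, hk with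
            | k + 1, _ => rfl
  | succ m ih =>
      intro k hk
      match k, hk with
      | k + 1, hk =>
        rw [gb_succ_succ, ih (by omega), ih (by omega), mul_zero, add_zero]

/-- Second Pascal recursion. -/
lemma gb_pascal₂ : ∀ m k : ℕ, gb (m + 1) (k + 1) = gb m k + X ^ (k + 1) * gb m (k + 1) := by
  intro m
  induction m with
  | zero =>
      intro k
      cases k with
      | zero => show gb 0 1 + X ^ 0 * gb 0 0 = gb 0 0 + X ^ 1 * gb 0 1
                show (0 : Polynomial ℤ) + X ^ 0 * 1 = 1 + X ^ 1 * 0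
                simp
      | succ k => show gb 0 (k+2) + X ^ (0 - (k+1)) * gb 0 (k+1)
                    = gb 0 (k+1) + X ^ (k + 2) * gb 0 (k+2)
                  show (0 : Polynomial ℤ) + X ^ (0 - (k+1)) * 0 = 0 + X ^ (k + 2) * 0
                  simp
  | succ m ih =>
      intro k
      cases k with
      | zero =>
        conv_lhs => rw [gb_succ_succ (m+1) 0, ih 0]
        conv_rhs => rw [gb_succ_succ m 0]
        simp only [gb_zero_right, Nat.sub_zero, mul_one, pow_zero]
        ring_nf
      | succ k =>
        conv_lhs => rw [gb_succ_succ (m+1) (k+1), ih (k+1), ih k]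
        conv_rhs => rw [gb_succ_succ m (k+1), gb_succ_succ m k]
        rw [show m + 1 - (k + 1) = m - k by omega]
        have key : X ^ (m - k) * (X ^ (k + 1) * gb m (k + 1))
            = X ^ (k + 1 + 1) * (X ^ (m - (k + 1)) * gb m (k + 1)) := by
          rcases le_or_gt (k + 1) m with h | h
          · rw [← mul_assoc, ← mul_assoc, ← pow_add, ← pow_add]
            congr 2
            omega
          · rw [gb_eq_zero h]
            ring
        linear_combination key

/-- The "balance" relation. -/
lemma gb_rel (m k : ℕ) :
    (1 - X ^ (k + 1)) * gb m (k + 1) = (1 - X ^ (m - k)) * gb m k := by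
  have h1 := gb_succ_succ m k
  have h2 := gb_pascal₂ m k
  linear_combination h2 - h1

lemma gb_one (m : ℕ) : gb m 1 = ∑ i ∈ Finset.range m, X ^ i := by
  induction m with
  | zero => rfl
  | succ m ih =>
      rw [show gb (m+1) 1 = gb m 1 + X ^ (m - 0) * gb m 0 from rfl, ih]
      simp [Finset.sum_range_succ]

/-- Key identity, main case. -/
lemma gb_key (n k : ℕ) :
    gb (2*n + 2) (k + 2) = (1 + X ^ (2*n + 1)) * gb (2*n) (k + 1)
      + X ^ (2*n - k) * gb (2*n) k + X ^ (k + 2) * gb (2*n) (k + 2) := by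
  have e1 : gb (2*n + 2) (k + 2) = gb (2*n) (k+1) + X ^ (k+2) * gb (2*n) (k+2)
      + X ^ (2*n - k) * (gb (2*n) (k+1) + X ^ (2*n - k) * gb (2*n) k) := by
    rw [show 2*n + 2 = (2*n+1) + 1 by ring, gb_succ_succ (2*n+1) (k+1),
      show 2*n + 1 - (k+1) = 2*n - k by omega, show (2*n+1 : ℕ) = 2*n + 1 from rfl,
      gb_pascal₂ (2*n) (k+1), gb_succ_succ (2*n) k]
  rcases le_or_gt k (2*n) with h | h
  · have hr := gb_rel (2*n) k
    have hp : (X : Polynomial ℤ) ^ (2*n + 1) = X ^ (2*n - k) * X ^ (k + 1) := by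
      rw [← pow_add]; congr 1; omega
    rw [e1, hp]
    linear_combination X ^ (2*n - k) * hr
  · rw [e1, gb_eq_zero (show 2*n < k+1 by omega), gb_eq_zero (show 2*n < k+2 by omega),
      gb_eq_zero h]
    ring

/-- Key identity, boundary case. -/
lemma gb_key₀ (n : ℕ) :
    gb (2*n + 2) 1 = (1 + X ^ (2*n + 1)) * gb (2*n) 0 + X ^ 1 * gb (2*n) 1 := by
  rw [gb_one, gb_one, gb_zero_right, mul_one, pow_one, Finset.mul_sum,
    show 2*n+2 = (2*n+1)+1 by ring, Finset.sum_range_succ, Finset.sum_range_succ']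
  simp only [pow_zero, ← pow_succ']
  ring

/-- Product formula: `gb m k * ∏_{j<k} (1-X^(j+1)) = ∏_{j<k} (1-X^(m+j+1-k))`. -/
lemma gb_prod : ∀ m k : ℕ, gb m k * ∏ j ∈ Finset.range k, (1 - X ^ (j+1))
    = ∏ j ∈ Finset.range k, (1 - (X : Polynomial ℤ) ^ (m + j + 1 - k)) := by
  intro m
  induction m with
  | zero =>
      intro k
      cases k with
      | zero => simp
      | succ k =>
          rw [show gb 0 (k+1) = 0 from rfl, zero_mul]
          rw [Finset.prod_eq_zero (Finset.self_mem_range_succ k)]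
          rw [show 0 + k + 1 - (k+1) = 0 by omega, pow_zero, sub_self]
  | succ m ih =>
      intro k
      cases k with
      | zero => simp
      | succ k =>
          have e1 : ∏ j ∈ Finset.range (k+1), (1 - (X : Polynomial ℤ) ^ (m + 1 + j + 1 - (k+1)))
              = (∏ j ∈ Finset.range k, (1 - (X : Polynomial ℤ) ^ (m + j + 1 - k)))
                * (1 - X ^ (m+1)) := by
            rw [Finset.prod_range_succ]
            congr 1
            · exact Finset.prod_congr rfl fun j hj => by congr 2; omega
            · congr 2
              omega
          have e3 : gb m (k+1) * ∏ j ∈ Finset.range (k+1), (1 - (X:Polynomial ℤ) ^ (j+1))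
              = (1 - X ^ (m - k)) * ∏ j ∈ Finset.range k, (1 - (X:Polynomial ℤ) ^ (m + j + 1 - k)) := by
            rw [ih (k+1), Finset.prod_range_succ', mul_comm]
            congr 1
            · congr 2
              omega
            · exact Finset.prod_congr rfl fun j hj => by congr 2; omega
          rw [gb_succ_succ, e1, add_mul, e3, Finset.prod_range_succ, ← mul_assoc,
            mul_assoc (X ^ (m-k)), ih k]
          rcases le_or_gt k m with h | h
          · have hp : (X:Polynomial ℤ) ^ (m - k) * X ^ (k+1) = X ^ (m+1) := by
              rw [← pow_add]; congr 1; omega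
            generalize (∏ j ∈ Finset.range k, (1 - (X:Polynomial ℤ) ^ (m + j + 1 - k))) = P
            ring_nf
            ring_nf at hp
            linear_combination (-P) * hp
          · have hA : ∏ j ∈ Finset.range k, (1 - (X:Polynomial ℤ) ^ (m + j + 1 - k)) = 0 := by
              apply Finset.prod_eq_zero (Finset.mem_range.mpr (show k - m - 1 < k by omega))
              rw [show m + (k - m - 1) + 1 - k = 0 by omega, pow_zero, sub_self]
            rw [hA]
            ring
-- triangular numbers
def T : ℕ → ℕ
  | 0 => 0
  | a + 1 => T a + (a + 1)

/-- exponent `T(k-n)` resp. `T(n-k-1)`. -/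
def tt (n k : ℕ) : ℕ := if n ≤ k then T (k - n) else T (n - k - 1)

lemma T_eq (a : ℕ) : T a = a * (a + 1) / 2 := by
  induction a with
  | zero => rfl
  | succ a ih =>
      show T a + (a+1) = _
      rw [ih]
      have h2 : 2 ∣ a * (a + 1) := (Nat.even_mul_succ_self a).two_dvd
      obtain ⟨c, hc⟩ := h2
      have h3 : (a+1) * (a+1+1) = a*(a+1) + 2*(a+1) := by ring
      omega

lemma tt_succ_succ (n k : ℕ) : tt (n + 1) (k + 1) = tt n k := by
  unfold tt
  rcases le_or_gt n k with h | h
  · rw [if_pos (by omega), if_pos h, show k + 1 - (n+1) = k - n by omega]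
  · rw [if_neg (by omega), if_neg (by omega), show n + 1 - (k+1) - 1 = n - k - 1 by omega]

lemma tt_E2 (n k : ℕ) : (k + 2) + tt n (k + 1) = n + tt n (k + 2) := by
  unfold tt
  rcases le_or_gt n (k+1) with h | h
  · rw [if_pos h, if_pos (by omega), show k + 2 - n = (k + 1 - n) + 1 by omega]
    show _ = n + (T (k+1-n) + (k+1-n+1))
    omega
  · rcases eq_or_lt_of_le (show k + 2 ≤ n by omega) with h2 | h2
    · rw [if_neg (by omega), if_pos (by omega), show n - (k+1) - 1 = 0 by omega,
        show k + 2 - n = 0 by omega]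
      show k + 2 + T 0 = n + T 0
      show k + 2 + 0 = n + 0
      omega
    · rw [if_neg (by omega), if_neg (by omega), show n - (k+1) - 1 = (n - (k+2) - 1) + 1 by omega]
      show (k+2) + (T (n - (k+2) - 1) + (n - (k+2) - 1 + 1)) = _
      omega

lemma tt_E1 (n k : ℕ) (hk : k ≤ 2 * n) : (2*n - k) + tt n (k + 1) = (n + 1) + tt n k := by
  unfold tt
  rcases le_or_gt n k with h | h
  · rw [if_pos (by omega), if_pos h, show k + 1 - n = (k - n) + 1 by omega]
    show 2*n - k + (T (k - n) + (k - n + 1)) = _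
    omega
  · rcases eq_or_lt_of_le (show k + 1 ≤ n by omega) with h2 | h2
    · rw [if_pos (by omega), if_neg (by omega), show k + 1 - n = 0 by omega,
        show n - k - 1 = 0 by omega]
      show 2*n - k + T 0 = n + 1 + T 0
      show 2*n - k + 0 = n + 1 + 0
      omega
    · rw [if_neg (by omega), if_neg (by omega), show n - k - 1 = (n - (k+1) - 1) + 1 by omega]
      show _ = (n+1) + (T (n - (k+1) - 1) + (n - (k+1) - 1 + 1))
      omega

open Polynomial in
/-- The summand in the (derived) Jacobi triple product sum. -/
noncomputable def term (n k : ℕ) : Polynomial ℤ :=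
  (-1) ^ (n + k) * gb (2*n) k * X ^ (tt n k)

open Polynomial in
lemma term_rec (n k : ℕ) :
    term (n+1) (k+2) = (1 + X ^ (2*n+1)) * term n (k+1)
      - X ^ (n+1) * term n k - X ^ n * term n (k+2) := by
  have h2 : (X : Polynomial ℤ)^(2*n-k) * X^(tt n (k+1)) * gb (2*n) k
      = X^(n+1) * X^(tt n k) * gb (2*n) k := by
    rcases le_or_gt k (2*n) with h | h
    · rw [← pow_add, ← pow_add, tt_E1 n k h]
    · rw [gb_eq_zero h, mul_zero, mul_zero]
  have h3 : (X : Polynomial ℤ)^(k+2) * X^(tt n (k+1)) * gb (2*n) (k+2)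
      = X^n * X^(tt n (k+2)) * gb (2*n) (k+2) := by
    rw [← pow_add, ← pow_add, tt_E2 n k]
  simp only [term]
  rw [show 2*(n+1) = 2*n + 2 by ring, gb_key, show tt (n+1) (k+2) = tt n (k+1) from
    tt_succ_succ n (k+1)]
  rw [show ((-1 : Polynomial ℤ)) ^ (n+1+(k+2)) = -(-1)^(n+k) by
      rw [show n+1+(k+2) = (n+k)+3 by ring, pow_add]; ring,
    show ((-1 : Polynomial ℤ)) ^ (n+(k+1)) = -(-1)^(n+k) by
      rw [show n+(k+1) = (n+k)+1 by ring, pow_add]; ring,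
    show ((-1 : Polynomial ℤ)) ^ (n+(k+2)) = (-1)^(n+k) by
      rw [show n+(k+2) = (n+k)+2 by ring, pow_add]; ring]
  linear_combination (-((-1 : Polynomial ℤ))^(n+k)) * h2 + (-((-1 : Polynomial ℤ))^(n+k)) * h3

open Polynomial in
lemma term_rec₀ (n : ℕ) : term (n+1) 0 = - (X ^ n * term n 0) := by
  simp only [term]
  rw [show 2*(n+1) = 2*n + 2 by ring]
  simp only [gb_zero_right, mul_one]
  rw [show ((-1 : Polynomial ℤ)) ^ (n+1+0) = -(-1)^(n+0) by rw [show n+1+0 = (n+0)+1 by ring, pow_add]; ring]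
  have : (X : Polynomial ℤ) ^ (tt (n+1) 0) = X ^ n * X ^ (tt n 0) := by
    rw [← pow_add]
    congr 1
    unfold tt
    rcases Nat.eq_zero_or_pos n with rfl | hn
    · rfl
    · rw [if_neg (by omega), if_neg (by omega), show n + 1 - 0 - 1 = (n - 0 - 1) + 1 by omega]
      show T (n - 0 - 1) + (n - 0 - 1 + 1) = _
      omega
  rw [this]
  ring

open Polynomial in
lemma term_rec₁ (n : ℕ) :
    term (n+1) 1 = (1 + X ^ (2*n+1)) * term n 0 - X ^ n * term n 1 := by
  simp only [term]
  rw [show 2*(n+1) = 2*n + 2 by ring, gb_key₀]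
  have ht0 : tt (n+1) 1 = tt n 0 := tt_succ_succ n 0
  have h3 : (X : Polynomial ℤ)^1 * X^(tt n 0) * gb (2*n) 1
      = X^n * X^(tt n 1) * gb (2*n) 1 := by
    have e : 1 + tt n 0 = n + tt n 1 := by
      unfold tt
      match n with
      | 0 => rfl
      | 1 => rfl
      | (n+2) =>
        rw [if_neg (by omega), if_neg (by omega), show n + 2 - 0 - 1 = (n + 2 - 1 - 1) + 1 by omega]
        show 1 + (T (n + 2 - 1 - 1) + (n + 2 - 1 - 1 + 1)) = _
        omega
    rw [← pow_add, ← pow_add, e]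
  rw [ht0]
  rw [show ((-1 : Polynomial ℤ)) ^ (n+1+1) = (-1)^(n+0) by
      rw [show n+1+1 = (n+0)+2 by ring, pow_add]; ring,
    show ((-1 : Polynomial ℤ)) ^ (n+1) = -(-1)^(n+0) by
      rw [show n+1 = (n+0)+1 by ring, pow_add]; ring]
  linear_combination ((-1 : Polynomial ℤ))^(n+0) * h3

open Polynomial

lemma term_zero_of_lt {n k : ℕ} (h : 2*n < k) : term n k = 0 := by
  simp only [term, gb_eq_zero h]
  ring

noncomputable def Ssum (n : ℕ) : Polynomial ℤ := ∑ k ∈ Finset.range (2*n+1), term n k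

noncomputable def Isum (n : ℕ) : Polynomial ℤ :=
  ∑ k ∈ Finset.range (2*n+1), C ((k : ℤ) - (n : ℤ)) * term n k

lemma sum_split2 {A : Type*} [AddCommMonoid A] (f : ℕ → A) (m : ℕ) :
    ∑ k ∈ Finset.range (m+2), f k = f 0 + f 1 + ∑ k ∈ Finset.range m, f (k+2) := by
  rw [Finset.sum_range_succ' f (m+1), Finset.sum_range_succ' (fun i => f (i+1)) m]
  abel

lemma shift1 (f : ℕ → Polynomial ℤ) (m : ℕ) (hm : f (m+1) = 0) :
    ∑ k ∈ Finset.range (m+1), f (k+1) = (∑ k ∈ Finset.range (m+1), f k) - f 0 := by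
  have h1 := Finset.sum_range_succ' f (m+1)
  have h2 := Finset.sum_range_succ f (m+1)
  rw [hm] at h2
  linear_combination h2 - h1

lemma shift2 (f : ℕ → Polynomial ℤ) (m : ℕ) (hm1 : f (m+1) = 0) (hm2 : f (m+2) = 0) :
    ∑ k ∈ Finset.range (m+1), f (k+2) = (∑ k ∈ Finset.range (m+1), f k) - f 0 - f 1 := by
  have h1 := sum_split2 f (m+1)
  have hA := Finset.sum_range_succ f (m+2)
  have hB := Finset.sum_range_succ f (m+1)
  rw [hm1] at hB
  rw [hm2] at hA
  rw [show m+1+2 = m+2+1 by ring] at h1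
  linear_combination hA + hB - h1

lemma Ssum_rec (n : ℕ) :
    Ssum (n+1) = (1 + X^(2*n+1) - X^(n+1) - X^n) * Ssum n := by
  have key : Ssum (n+1) = term (n+1) 0 + term (n+1) 1
      + ∑ k ∈ Finset.range (2*n+1), term (n+1) (k+2) := by
    rw [Ssum, show 2*(n+1)+1 = (2*n+1)+2 by ring, sum_split2]
  rw [key, term_rec₀, term_rec₁]
  have : ∑ k ∈ Finset.range (2*n+1), term (n+1) (k+2)
      = (1 + X^(2*n+1)) * ((Ssum n) - term n 0)
        - X^(n+1) * Ssum n - X^n * ((Ssum n) - term n 0 - term n 1) := by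
    rw [Finset.sum_congr rfl (fun k _ => term_rec n k)]
    rw [Finset.sum_sub_distrib, Finset.sum_sub_distrib, ← Finset.mul_sum, ← Finset.mul_sum,
      ← Finset.mul_sum]
    rw [shift1 (term n) (2*n) (term_zero_of_lt (by omega)),
      shift2 (term n) (2*n) (term_zero_of_lt (by omega)) (term_zero_of_lt (by omega))]
    rfl
  rw [this]
  ring

lemma Ssum_eq_zero : ∀ n : ℕ, Ssum (n+1) = 0 := by
  intro n
  induction n with
  | zero =>
      show ∑ k ∈ Finset.range 3, term 1 k = 0
      have g21 : gb 2 1 = 1 + X := by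
        rw [gb_one]
        rw [Finset.sum_range_succ, Finset.sum_range_succ, Finset.sum_range_zero]
        ring
      have g12 : gb 1 2 = 0 := gb_eq_zero (by omega)
      have g11 : gb 1 1 = 1 := by
        rw [gb_succ_succ 0 0, show gb 0 1 = 0 from rfl, gb_zero_right]
        ring
      have g22 : gb 2 2 = 1 := by
        rw [gb_succ_succ 1 1, g12, g11]
        ring
      have t10 : tt 1 0 = 0 := by simp [tt, T]
      have t11 : tt 1 1 = 0 := by simp [tt, T]
      have t12 : tt 1 2 = 1 := by simp [tt, T]
      rw [Finset.sum_range_succ, Finset.sum_range_succ, Finset.sum_range_succ,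
        Finset.sum_range_zero]
      simp only [term, t10, t11, t12, g21, g22, show (2*1 : ℕ) = 2 from rfl, gb_zero_right]
      ring
  | succ n ih =>
      rw [Ssum_rec, ih, mul_zero]

open Polynomial

lemma Isum_rec (n : ℕ) :
    Isum (n+1) = (1 + X^(2*n+1) - X^(n+1) - X^n) * Isum n - (X^(n+1) - X^n) * Ssum n := by
  set g : ℕ → Polynomial ℤ := fun k => C ((k : ℤ) - (n : ℤ)) * term n k with hg
  have hg0 : g 0 = C (-(n:ℤ)) * term n 0 := by simp [hg]
  have hg1 : g 1 = C (1-(n:ℤ)) * term n 1 := by simp [hg]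
  have hgz1 : g (2*n+1) = 0 := by simp [hg, term_zero_of_lt (show 2*n < 2*n+1 by omega)]
  have hgz2 : g (2*n+2) = 0 := by simp [hg, term_zero_of_lt (show 2*n < 2*n+2 by omega)]
  have key : Isum (n+1)
      = C (0 - ((n:ℤ)+1)) * term (n+1) 0 + C (1 - ((n:ℤ)+1)) * term (n+1) 1
        + ∑ k ∈ Finset.range (2*n+1), C (((k:ℤ)+2) - ((n:ℤ)+1)) * term (n+1) (k+2) := by
    rw [Isum, show 2*(n+1)+1 = (2*n+1)+2 by ring,
      sum_split2 (fun k => C ((k : ℤ) - ((n+1 : ℕ) : ℤ)) * term (n+1) k) (2*n+1)]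
    push_cast
    ring_nf
  have hI1 : ∑ k ∈ Finset.range (2*n+1), C (((k:ℤ)+1) - (n:ℤ)) * term n (k+1)
      = Isum n - g 0 := by
    rw [show Isum n = ∑ k ∈ Finset.range (2*n+1), g k from rfl, ← shift1 g (2*n) hgz1]
    apply Finset.sum_congr rfl
    intro k _
    simp only [hg]
    push_cast
    ring_nf
  have hI2 : ∑ k ∈ Finset.range (2*n+1), C (((k:ℤ)+1) - (n:ℤ)) * term n k
      = Isum n + Ssum n := by
    rw [show Isum n = ∑ k ∈ Finset.range (2*n+1), g k from rfl, Ssum,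
      ← Finset.sum_add_distrib]
    apply Finset.sum_congr rfl
    intro k _
    simp only [hg]
    rw [show ((k:ℤ)+1) - (n:ℤ) = ((k:ℤ) - n) + 1 by ring, map_add, C_1]
    ring
  have hI3 : ∑ k ∈ Finset.range (2*n+1), C (((k:ℤ)+1) - (n:ℤ)) * term n (k+2)
      = (Isum n - g 0 - g 1) - (Ssum n - term n 0 - term n 1) := by
    rw [show Isum n = ∑ k ∈ Finset.range (2*n+1), g k from rfl, Ssum,
      ← shift2 g (2*n) hgz1 hgz2,
      ← shift2 (term n) (2*n) (term_zero_of_lt (by omega)) (term_zero_of_lt (by omega)),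
      ← Finset.sum_sub_distrib]
    apply Finset.sum_congr rfl
    intro k _
    simp only [hg]
    push_cast
    rw [show ((k:ℤ)+1) - (n:ℤ) = (((k:ℤ)+2) - n) - 1 by ring, map_sub, C_1]
    ring
  rw [key]
  have hsum : ∑ k ∈ Finset.range (2*n+1), C (((k:ℤ)+2) - ((n:ℤ)+1)) * term (n+1) (k+2)
      = (1 + X^(2*n+1)) * (Isum n - g 0) - X^(n+1) * (Isum n + Ssum n)
        - X^n * ((Isum n - g 0 - g 1) - (Ssum n - term n 0 - term n 1)) := by
    have step : ∀ k : ℕ, C (((k:ℤ)+2) - ((n:ℤ)+1)) * term (n+1) (k+2)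
        = (1+X^(2*n+1)) * (C (((k:ℤ)+1) - (n:ℤ)) * term n (k+1))
          - X^(n+1) * (C (((k:ℤ)+1) - (n:ℤ)) * term n k)
          - X^n * (C (((k:ℤ)+1) - (n:ℤ)) * term n (k+2)) := fun k => by
      rw [term_rec n k, show ((k:ℤ)+2)-((n:ℤ)+1) = ((k:ℤ)+1)-(n:ℤ) by ring]
      ring
    rw [Finset.sum_congr rfl fun k _ => step k, Finset.sum_sub_distrib, Finset.sum_sub_distrib,
      ← Finset.mul_sum, ← Finset.mul_sum, ← Finset.mul_sum, hI1, hI2, hI3]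
  rw [hsum, term_rec₀, term_rec₁, hg0, hg1]
  rw [show C (0 - ((n:ℤ)+1)) = -C ((n:ℤ)) - 1 by rw [map_sub, map_add, map_one, map_zero]; ring,
    show C (1 - ((n:ℤ)+1)) = -C ((n:ℤ)) by rw [show (1 - ((n:ℤ)+1)) = -(n:ℤ) by ring]; simp,
    show C (-(n:ℤ)) = -C ((n:ℤ)) by simp,
    show C (1 - (n:ℤ)) = 1 - C ((n:ℤ)) by rw [map_sub]; simp]
  ring

open Polynomial

noncomputable def Epoly (m : ℕ) : Polynomial ℤ := ∏ j ∈ Finset.range m, (1 - X^(j+1))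

lemma Isum_eq : ∀ n : ℕ, Isum (n+1) = Epoly (n+1) * Epoly n := by
  intro n
  induction n with
  | zero =>
      have g21 : gb 2 1 = 1 + X := by
        rw [gb_one, Finset.sum_range_succ, Finset.sum_range_succ, Finset.sum_range_zero]; ring
      have g22 : gb 2 2 = 1 := by
        rw [gb_succ_succ 1 1, gb_eq_zero (show 1 < 2 by omega), gb_succ_succ 0 0,
          show gb 0 1 = 0 from rfl, gb_zero_right]
        ring
      have t10 : tt 1 0 = 0 := by simp [tt, T]
      have t11 : tt 1 1 = 0 := by simp [tt, T]
      have t12 : tt 1 2 = 1 := by simp [tt, T]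
      show ∑ k ∈ Finset.range 3, C ((k:ℤ) - (1:ℕ)) * term 1 k = _
      rw [Finset.sum_range_succ, Finset.sum_range_succ, Finset.sum_range_succ,
        Finset.sum_range_zero]
      simp only [term, t10, t11, t12, g21, g22, show (2*1:ℕ) = 2 from rfl, gb_zero_right,
        Epoly, Finset.prod_range_succ, Finset.prod_range_zero]
      push_cast
      simp only [map_sub, map_zero, map_one, map_ofNat]
      norm_num
      ring
  | succ n ih =>
      rw [Isum_rec (n+1), ih, Ssum_eq_zero n, mul_zero, sub_zero]
      have hp : (X : Polynomial ℤ)^(n+1) * X^(n+2) = X^(2*(n+1)+1) := by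
        rw [← pow_add]; congr 1; omega
      have e1 : Epoly (n+1+1) = Epoly (n+1) * (1 - X^(n+1+1)) := Finset.prod_range_succ _ _
      have e0 : Epoly (n+1) = Epoly n * (1 - X^(n+1)) := Finset.prod_range_succ _ _
      rw [e1, e0]
      linear_combination (Epoly n * Epoly n * (1 - X^(n+1))) * hp

open PowerSeries

section PS
variable {R : Type*} [CommRing R]

lemma dvd_mul_sub_one {M : ℕ} {a b : R⟦X⟧} (ha : (X:R⟦X⟧)^M ∣ a - 1)
    (hb : (X:R⟦X⟧)^M ∣ b - 1) : (X:R⟦X⟧)^M ∣ a * b - 1 := by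
  have h : a * b - 1 = (a - 1) * b + (b - 1) := by ring
  rw [h]
  exact dvd_add (ha.mul_right b) hb

lemma dvd_prod_sub_one {M : ℕ} {s : Finset ℕ} {f : ℕ → R⟦X⟧}
    (h : ∀ i ∈ s, (X:R⟦X⟧)^M ∣ f i - 1) : (X:R⟦X⟧)^M ∣ (∏ i ∈ s, f i) - 1 := by
  classical
  induction s using Finset.induction_on with
  | empty => simp
  | insert _ _ hx ih =>
      rename_i a s'
      rw [Finset.prod_insert hx]
      exact dvd_mul_sub_one (h a (Finset.mem_insert_self a s'))
        (ih fun i hi => h i (Finset.mem_insert_of_mem hi))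

lemma dvd_pow_sub_one {M s : ℕ} {a : R⟦X⟧} (ha : (X:R⟦X⟧)^M ∣ a - 1) :
    (X:R⟦X⟧)^M ∣ a^s - 1 := by
  induction s with
  | zero => simp
  | succ s ih => rw [pow_succ]; exact dvd_mul_sub_one ih ha

lemma isUnit_one_sub_X_pow'_s12 {e : ℕ} (he : 0 < e) : IsUnit (1 - (X:R⟦X⟧)^e) := by
  rw [PowerSeries.isUnit_iff_constantCoeff]
  rw [map_sub, map_one, map_pow, PowerSeries.constantCoeff_X, zero_pow he.ne']
  simpa using isUnit_one

lemma dvd_of_unit_factor {M : ℕ} {a v : R⟦X⟧} (hv : IsUnit v)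
    (hv1 : (X:R⟦X⟧)^M ∣ v - 1) (h : (X:R⟦X⟧)^M ∣ a * v - 1) : (X:R⟦X⟧)^M ∣ a - 1 := by
  obtain ⟨u, rfl⟩ := hv
  have huu : (↑u : R⟦X⟧) * ↑u⁻¹ = 1 := u.mul_inv
  have key : a - 1 = (a * ↑u - 1) * ↑u⁻¹ + (1 - ↑u) * ↑u⁻¹ := by
    linear_combination (1 - a) * huu
  rw [key]
  refine dvd_add (h.mul_right _) (Dvd.dvd.mul_right ?_ _)
  rw [show (1 : R⟦X⟧) - ↑u = -(↑u - 1) by ring]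
  exact hv1.neg_right

lemma dvd_one_sub_one_sub_pow {M e : ℕ} (h : M ≤ e) :
    (X:R⟦X⟧)^M ∣ (1 - (X:R⟦X⟧)^e) - 1 := by
  rw [show (1 - (X:R⟦X⟧)^e) - 1 = -((X:R⟦X⟧)^e) by ring]
  exact (pow_dvd_pow (X:R⟦X⟧) h).neg_right

end PS

lemma T_ge (a : ℕ) : a ≤ T a := by
  induction a with
  | zero => simp [T]
  | succ a ih => show a + 1 ≤ T a + (a+1); omega

section PS2
open PowerSeries
variable {R : Type*} [CommRing R]

lemma aeval_Epoly (y : R⟦X⟧) (n : ℕ) :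
    Polynomial.aeval y (Epoly n) = ∏ j ∈ Finset.range n, (1 - y^(j+1)) := by
  simp only [Epoly, map_prod, map_sub, map_one, map_pow, Polynomial.aeval_X]

lemma gbE_congr (c n k M : ℕ) (hc : 0 < c) (hk : k ≤ 2*n)
    (h1 : M ≤ 2*n + 1 - k) (h2 : M ≤ min k n + 1) :
    (X:R⟦X⟧)^M ∣ (Polynomial.aeval ((X:R⟦X⟧)^c) (gb (2*n) k))
      * (Polynomial.aeval ((X:R⟦X⟧)^c) (Epoly n)) - 1 := by
  set y : R⟦X⟧ := (X:R⟦X⟧)^c with hy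
  have hye : ∀ e : ℕ, M ≤ e → (X:R⟦X⟧)^M ∣ (1 - y^e) - 1 := by
    intro e he
    rw [hy, ← pow_mul]
    exact dvd_one_sub_one_sub_pow (le_trans he (Nat.le_mul_of_pos_left e hc))
  have hEq : (Polynomial.aeval y (gb (2*n) k)) * ∏ j ∈ Finset.range k, (1 - y^(j+1))
      = ∏ j ∈ Finset.range k, (1 - y^(2*n + j + 1 - k)) := by
    have h := congrArg (fun p : Polynomial ℤ => Polynomial.aeval (A := R⟦X⟧) y p)
      (gb_prod (2*n) k)
    simpa only [map_mul, map_prod, map_sub, map_one, map_pow, Polynomial.aeval_X] using h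
  have hE := aeval_Epoly y n
  rcases le_or_gt k n with h | h
  · have hsplit : ∏ j ∈ Finset.range n, (1 - y^(j+1))
        = (∏ j ∈ Finset.range k, (1 - y^(j+1)))
          * ∏ j ∈ Finset.range (n-k), (1 - y^((k+j)+1)) := by
      rw [show n = k + (n-k) by omega, Finset.prod_range_add]
      rw [show k + (n-k) - k = n - k by omega]
    rw [hE, hsplit, ← mul_assoc, hEq]
    apply dvd_mul_sub_one
    · exact dvd_prod_sub_one fun j _ => hye _ (by omega)
    · exact dvd_prod_sub_one fun j _ => hye _ (by omega)
  · have hsplit : ∏ j ∈ Finset.range k, (1 - y^(j+1))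
        = (∏ j ∈ Finset.range n, (1 - y^(j+1)))
          * ∏ j ∈ Finset.range (k-n), (1 - y^((n+j)+1)) := by
      rw [show k = n + (k-n) by omega, Finset.prod_range_add]
      rw [show n + (k-n) - n = k - n by omega]
    set V : R⟦X⟧ := ∏ j ∈ Finset.range (k-n), (1 - y^((n+j)+1)) with hV
    have hVu : IsUnit V := by
      rw [hV]
      apply Finset.prod_induction _ IsUnit (fun a b ha hb => ha.mul hb) isUnit_one
      intro j _
      rw [hy, ← pow_mul]
      exact isUnit_one_sub_X_pow'_s12 (by positivity)
    have hV1 : (X:R⟦X⟧)^M ∣ V - 1 := dvd_prod_sub_one fun j _ => hye _ (by omega)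
    apply dvd_of_unit_factor hVu hV1
    rw [hE, mul_assoc, ← hsplit, hEq]
    exact dvd_prod_sub_one fun j _ => hye _ (by omega)

end PS2

section Jacobi
open PowerSeries
variable {R : Type*} [CommRing R]

lemma aeval_Isum (y : R⟦X⟧) (n : ℕ) :
    Polynomial.aeval y (Isum n)
      = ∑ k ∈ Finset.range (2*n+1),
          (((k:ℤ) - (n:ℤ) : ℤ) : R⟦X⟧) * (-1 : R⟦X⟧)^(n+k)
            * Polynomial.aeval y (gb (2*n) k) * y^(tt n k) := by
  simp only [Isum, term, map_sum, map_mul, map_pow, Polynomial.aeval_C, Polynomial.aeval_X,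
    map_neg, map_one]
  apply Finset.sum_congr rfl
  intro k _
  rw [eq_intCast (algebraMap ℤ (PowerSeries R))]
  ring

lemma jacobi_cube (c D : ℕ) (hc : 0 < c) :
    (X:R⟦X⟧)^(D+1) ∣
      (∏ m ∈ Finset.range (2*D+2), (1 - ((X:R⟦X⟧)^c)^(m+1)))^3
        - ∑ j ∈ Finset.range (2*D+2),
            ((((-1)^j * (2*(j:ℤ)+1)) : ℤ) : R⟦X⟧) * ((X:R⟦X⟧)^c)^(T j) := by
  set M := D + 1 with hM
  set y : R⟦X⟧ := (X:R⟦X⟧)^c with hy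
  set n : ℕ := 2*D + 2 with hn
  have hydvd : ∀ e : ℕ, M ≤ e → (X:R⟦X⟧)^M ∣ y^e := by
    intro e he
    rw [hy, ← pow_mul]
    exact pow_dvd_pow _ (le_trans he (Nat.le_mul_of_pos_left e hc))
  set A : R⟦X⟧ := ∏ m ∈ Finset.range n, (1 - y^(m+1)) with hA
  set B : R⟦X⟧ := ∏ m ∈ Finset.range (2*D+1), (1 - y^(m+1)) with hB
  have hAB : A = B * (1 - y^n) := by
    rw [hA, hB, hn, show 2*D+2 = (2*D+1)+1 from rfl, Finset.prod_range_succ]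
  -- the mapped Jacobi identity
  have hIs : Polynomial.aeval y (Isum n) = A * B := by
    rw [show (n:ℕ) = (2*D+1)+1 from rfl, Isum_eq (2*D+1), map_mul, aeval_Epoly, aeval_Epoly,
      ← hA, ← hB]
  have hIs2 : (∑ k ∈ Finset.range (2*n+1),
        (((k:ℤ) - (n:ℤ) : ℤ) : R⟦X⟧) * (-1 : R⟦X⟧)^(n+k)
          * Polynomial.aeval y (gb (2*n) k) * y^(tt n k)) * A = A * B * A := by
    rw [← aeval_Isum, hIs]
  -- replace gb*A by 1 modulo X^M, term by term
  have key2 : (X:R⟦X⟧)^M ∣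
      (∑ k ∈ Finset.range (2*n+1),
        (((k:ℤ) - (n:ℤ) : ℤ) : R⟦X⟧) * (-1 : R⟦X⟧)^(n+k)
          * Polynomial.aeval y (gb (2*n) k) * y^(tt n k)) * A
      - ∑ k ∈ Finset.range (2*n+1),
        (((k:ℤ) - (n:ℤ) : ℤ) : R⟦X⟧) * (-1 : R⟦X⟧)^(n+k) * y^(tt n k) := by
    rw [Finset.sum_mul, ← Finset.sum_sub_distrib]
    apply Finset.dvd_sum
    intro k hk
    have hk2 : k ≤ 2*n := by
      have := Finset.mem_range.mp hk
      omega
    rcases le_or_gt M (tt n k) with ht | ht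
    · apply dvd_sub
      · exact ((hydvd _ ht).mul_left _).mul_right A
      · exact (hydvd _ ht).mul_left _
    · -- small exponent: k is within D+1 of n
      have hbound : n ≤ k + (D+1) ∧ k ≤ n + D := by
        constructor
        · rcases le_or_gt n k with h | h
          · omega
          · have := T_ge (n - k - 1)
            have htt : tt n k = T (n - k - 1) := by rw [tt, if_neg (by omega)]
            omega
        · rcases le_or_gt n k with h | h
          · have := T_ge (k - n)
            have htt : tt n k = T (k - n) := by rw [tt, if_pos h]
            omega
          · omega
      have hcong := gbE_congr (R := R) c n k M hc hk2 (by omega) (by omega)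
      rw [aeval_Epoly, ← hA] at hcong
      have : (((k:ℤ) - (n:ℤ) : ℤ) : R⟦X⟧) * (-1 : R⟦X⟧)^(n+k)
            * Polynomial.aeval y (gb (2*n) k) * y^(tt n k) * A
          - (((k:ℤ) - (n:ℤ) : ℤ) : R⟦X⟧) * (-1 : R⟦X⟧)^(n+k) * y^(tt n k)
          = ((((k:ℤ) - (n:ℤ) : ℤ) : R⟦X⟧) * (-1 : R⟦X⟧)^(n+k) * y^(tt n k))
            * (Polynomial.aeval y (gb (2*n) k) * A - 1) := by ring
      rw [this]
      exact Dvd.dvd.mul_left hcong _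
  -- A^3 is congruent to the weighted sum
  have key3 : (X:R⟦X⟧)^M ∣ A^3
      - ∑ k ∈ Finset.range (2*n+1),
        (((k:ℤ) - (n:ℤ) : ℤ) : R⟦X⟧) * (-1 : R⟦X⟧)^(n+k) * y^(tt n k) := by
    have hA3 : A^3 = (A * B * A) * (1 - y^n) + A^2 * (A - B * (1 - y^n)) := by ring
    rw [hA3, ← hAB, sub_self, mul_zero, add_zero, ← hIs2]
    set S1 := (∑ k ∈ Finset.range (2*n+1),
        (((k:ℤ) - (n:ℤ) : ℤ) : R⟦X⟧) * (-1 : R⟦X⟧)^(n+k)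
          * Polynomial.aeval y (gb (2*n) k) * y^(tt n k)) * A with hS1
    set S2 := ∑ k ∈ Finset.range (2*n+1),
        (((k:ℤ) - (n:ℤ) : ℤ) : R⟦X⟧) * (-1 : R⟦X⟧)^(n+k) * y^(tt n k) with hS2
    have expand : S1 * (1 - y^n) - S2 = (S1 - S2) * (1 - y^n) - S2 * y^n := by ring
    rw [expand]
    exact dvd_sub ((key2).mul_right _) (Dvd.dvd.mul_left (hydvd n (by omega)) _)
  -- pairing of the sum
  have key4 : (X:R⟦X⟧)^M ∣
      (∑ k ∈ Finset.range (2*n+1),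
        (((k:ℤ) - (n:ℤ) : ℤ) : R⟦X⟧) * (-1 : R⟦X⟧)^(n+k) * y^(tt n k))
      - ∑ j ∈ Finset.range n, ((((-1)^j * (2*(j:ℤ)+1)) : ℤ) : R⟦X⟧) * y^(T j) := by
    have hsplit : ∑ k ∈ Finset.range (2*n+1),
          (((k:ℤ) - (n:ℤ) : ℤ) : R⟦X⟧) * (-1 : R⟦X⟧)^(n+k) * y^(tt n k)
        = (∑ k ∈ Finset.range (2*n),
            (((k:ℤ) - (n:ℤ) : ℤ) : R⟦X⟧) * (-1 : R⟦X⟧)^(n+k) * y^(tt n k))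
          + (((2*n:ℤ) - (n:ℤ) : ℤ) : R⟦X⟧) * (-1 : R⟦X⟧)^(n+2*n) * y^(tt n (2*n)) := by
      rw [Finset.sum_range_succ]
      push_cast
      ring
    have hpair : ∑ k ∈ Finset.range (2*n),
          (((k:ℤ) - (n:ℤ) : ℤ) : R⟦X⟧) * (-1 : R⟦X⟧)^(n+k) * y^(tt n k)
        = ∑ j ∈ Finset.range n, ((((-1)^j * (2*(j:ℤ)+1)) : ℤ) : R⟦X⟧) * y^(T j) := by
      rw [show 2*n = n + n by ring, Finset.sum_range_add,
        ← Finset.sum_range_reflect (fun k => (((k:ℤ) - (n:ℤ) : ℤ) : R⟦X⟧)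
            * (-1 : R⟦X⟧)^(n+k) * y^(tt n k)) n,
        ← Finset.sum_add_distrib]
      apply Finset.sum_congr rfl
      intro j hj
      have hjn : j < n := Finset.mem_range.mp hj
      have e1 : tt n (n - 1 - j) = T j := by
        rw [tt, if_neg (by omega), show n - (n-1-j) - 1 = j by omega]
      have e2 : tt n (n + j) = T j := by
        rw [tt, if_pos (by omega), show n + j - n = j by omega]
      have s1 : (-1 : R⟦X⟧)^(n + (n-1-j)) = (-1 : R⟦X⟧)^(j+1) := by
        rw [show n + (n-1-j) = (j+1) + 2*(n-1-j) by omega, pow_add, pow_mul, neg_one_sq,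
          one_pow, mul_one]
      have s2 : (-1 : R⟦X⟧)^(n + (n+j)) = (-1 : R⟦X⟧)^j := by
        rw [show n + (n+j) = j + 2*n by omega, pow_add, pow_mul, neg_one_sq, one_pow, mul_one]
      have c1 : (((n - 1 - j : ℕ):ℤ) - (n:ℤ) : ℤ) = -((j:ℤ)+1) := by
        have : ((n - 1 - j : ℕ):ℤ) = (n:ℤ) - 1 - j := by
          push_cast [Nat.cast_sub (by omega : 1 + j ≤ n)]
          omega
        omega
      have c2 : (((n + j : ℕ):ℤ) - (n:ℤ) : ℤ) = (j:ℤ) := by push_cast; ring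
      rw [e1, e2, s1, s2, c1, c2]
      push_cast
      ring
    rw [hsplit, hpair]
    have e3 : tt n (2*n) = T n := by rw [tt, if_pos (by omega), show 2*n - n = n by omega]
    rw [e3, add_sub_cancel_left]
    exact Dvd.dvd.mul_left (hydvd (T n) (le_trans (by omega) (T_ge n))) _
  -- combine
  have hfin := dvd_add key3 key4
  rw [show A^3 - (∑ k ∈ Finset.range (2*n+1),
        (((k:ℤ) - (n:ℤ) : ℤ) : R⟦X⟧) * (-1 : R⟦X⟧)^(n+k) * y^(tt n k))
      + ((∑ k ∈ Finset.range (2*n+1),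
        (((k:ℤ) - (n:ℤ) : ℤ) : R⟦X⟧) * (-1 : R⟦X⟧)^(n+k) * y^(tt n k))
      - ∑ j ∈ Finset.range n, ((((-1)^j * (2*(j:ℤ)+1)) : ℤ) : R⟦X⟧) * y^(T j))
      = A^3 - ∑ j ∈ Finset.range n, ((((-1)^j * (2*(j:ℤ)+1)) : ℤ) : R⟦X⟧) * y^(T j) by ring]
    at hfin
  exact hfin

end Jacobi

lemma Tdouble (a : ℕ) : 2 * T a = a * (a + 1) := by
  induction a with
  | zero => rfl
  | succ a ih =>
      show 2 * (T a + (a+1)) = _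
      rw [Nat.mul_add, ih]
      ring

open PowerSeries Finset

section Final
open PowerSeries

lemma coeff_eq_of_dvd {S : Type*} [CommRing S] {n : ℕ} {a b : S⟦X⟧}
    (h : (X:S⟦X⟧)^(n+1) ∣ a - b) : PowerSeries.coeff n a = PowerSeries.coeff n b := by
  have h2 := PowerSeries.X_pow_dvd_iff.mp h n (lt_add_one n)
  rw [map_sub] at h2
  exact sub_eq_zero.mp h2

lemma tau_eq (n : ℕ) : tau 24 (n+1)
    = PowerSeries.coeff n (∏ m ∈ Finset.range (n+1), (1 - (X:ℤ⟦X⟧)^(m+1))^24) := by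
  rw [tau, show n + 1 - 1 = n from rfl]
  congr 1
  rw [← Units.coeHom_apply, map_prod]
  apply Finset.prod_congr rfl
  intro m _
  rw [Units.coeHom_apply, show (24:ℤ) = ((24:ℕ):ℤ) by norm_num, zpow_natCast,
    Units.val_pow_eq_pow_val, IsUnit.unit_spec]

/-- `τ(n+1) ≡ Σ (-1)^(m+r)(2m+1)(2r+1) (mod 7)`, the sum over all pairs of nonnegative
integers `(m, r)` with `n = m(m+1)/2 + 7·r(r+1)/2`.  (Any such pair satisfies `m, r ≤ n`,
so the sum may be taken over `range (n+1) × range (n+1)`.) -/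
theorem ramanujanTau_modEq_seven (n : ℕ) (hn : 0 < n) :
    tau 24 (n + 1) ≡
      (∑ x ∈ (Finset.range (n + 1) ×ˢ Finset.range (n + 1)).filter
          (fun x => 2 * n = x.1 * (x.1 + 1) + 7 * (x.2 * (x.2 + 1))),
        (-1 : ℤ) ^ (x.1 + x.2) * (2 * x.1 + 1) * (2 * x.2 + 1)) [ZMOD 7] := by
  haveI : Fact (Nat.Prime 7) := ⟨by norm_num⟩
  haveI : CharP ((ZMod 7)⟦X⟧) 7 := by
    constructor
    intro m
    rw [← map_natCast (PowerSeries.C (R := ZMod 7)) m]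
    constructor
    · intro h
      have h2 := congrArg (PowerSeries.constantCoeff (R := ZMod 7)) h
      rw [PowerSeries.constantCoeff_C, map_zero] at h2
      exact (CharP.cast_eq_zero_iff (ZMod 7) 7 m).mp h2
    · intro h
      rw [(CharP.cast_eq_zero_iff (ZMod 7) 7 m).mpr h, map_zero]
  suffices h : ((tau 24 (n+1) : ℤ) : ZMod 7)
      = (((∑ x ∈ (Finset.range (n + 1) ×ˢ Finset.range (n + 1)).filter
          (fun x => 2 * n = x.1 * (x.1 + 1) + 7 * (x.2 * (x.2 + 1))),
        (-1 : ℤ) ^ (x.1 + x.2) * (2 * x.1 + 1) * (2 * x.2 + 1)) : ℤ) : ZMod 7) by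
    have h2 := (ZMod.intCast_eq_intCast_iff _ _ 7).mp h
    simpa using h2
  rw [tau_eq]
  -- move to (ZMod 7)⟦X⟧
  have step1 : ((PowerSeries.coeff n (∏ m ∈ Finset.range (n+1),
        (1 - (X:ℤ⟦X⟧)^(m+1))^24) : ℤ) : ZMod 7)
      = PowerSeries.coeff n (∏ m ∈ Finset.range (n+1), (1 - (X:(ZMod 7)⟦X⟧)^(m+1))^24) := by
    calc ((PowerSeries.coeff n (∏ m ∈ Finset.range (n+1),
            (1 - (X:ℤ⟦X⟧)^(m+1))^24) : ℤ) : ZMod 7)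
        = (Int.castRingHom (ZMod 7)) (PowerSeries.coeff n (∏ m ∈ Finset.range (n+1),
            (1 - (X:ℤ⟦X⟧)^(m+1))^24)) := rfl
      _ = PowerSeries.coeff n (PowerSeries.map (Int.castRingHom (ZMod 7))
            (∏ m ∈ Finset.range (n+1), (1 - (X:ℤ⟦X⟧)^(m+1))^24)) :=
          (PowerSeries.coeff_map _ _ _).symm
      _ = _ := by
          congr 1
          simp only [map_prod, map_pow, map_sub, map_one, PowerSeries.map_X]
  rw [step1]
  -- extend the product from range (n+1) to range (2n+2)
  have step2 : PowerSeries.coeff n (∏ m ∈ Finset.range (n+1), (1 - (X:(ZMod 7)⟦X⟧)^(m+1))^24)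
      = PowerSeries.coeff n (∏ m ∈ Finset.range (2*n+2), (1 - (X:(ZMod 7)⟦X⟧)^(m+1))^24) := by
    apply (coeff_eq_of_dvd _).symm
    have hsp : ∏ m ∈ Finset.range (2*n+2), (1 - (X:(ZMod 7)⟦X⟧)^(m+1))^24
        = (∏ m ∈ Finset.range (n+1), (1 - (X:(ZMod 7)⟦X⟧)^(m+1))^24)
          * ∏ j ∈ Finset.range (n+1), (1 - (X:(ZMod 7)⟦X⟧)^((n+1+j)+1))^24 := by
      rw [show 2*n+2 = (n+1) + (n+1) by ring, Finset.prod_range_add]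
    rw [hsp, show ∀ a b : (ZMod 7)⟦X⟧, a * b - a = a * (b - 1) by intro a b; ring]
    apply Dvd.dvd.mul_left
    apply dvd_prod_sub_one
    intro j _
    exact dvd_pow_sub_one (dvd_one_sub_one_sub_pow (by omega))
  rw [step2]
  -- factor using char 7
  have step3 : ∏ m ∈ Finset.range (2*n+2), (1 - (X:(ZMod 7)⟦X⟧)^(m+1))^24
      = (∏ m ∈ Finset.range (2*n+2), (1 - ((X:(ZMod 7)⟦X⟧)^1)^(m+1)))^3
        * (∏ m ∈ Finset.range (2*n+2), (1 - ((X:(ZMod 7)⟦X⟧)^7)^(m+1)))^3 := by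
    rw [← Finset.prod_pow, ← Finset.prod_pow, ← Finset.prod_mul_distrib]
    apply Finset.prod_congr rfl
    intro m _
    have h7 : ((1:(ZMod 7)⟦X⟧) - (X:(ZMod 7)⟦X⟧)^(m+1))^7
        = 1 - ((X:(ZMod 7)⟦X⟧)^7)^(m+1) := by
      rw [sub_pow_char, one_pow, ← pow_mul, ← pow_mul, Nat.mul_comm]
    rw [show ((1:(ZMod 7)⟦X⟧) - (X:(ZMod 7)⟦X⟧)^(m+1))^24
        = ((1 - (X:(ZMod 7)⟦X⟧)^(m+1))^7)^3 * ((1 - (X:(ZMod 7)⟦X⟧)^(m+1)))^3 by ring,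
      h7, show ((X:(ZMod 7)⟦X⟧))^1 = (X:(ZMod 7)⟦X⟧) from pow_one _]
    ring
  rw [step3]
  -- apply the Jacobi congruence twice
  have j1 := jacobi_cube (R := ZMod 7) 1 n one_pos
  have j7 := jacobi_cube (R := ZMod 7) 7 n (by norm_num)
  have step4 : PowerSeries.coeff n
        ((∏ m ∈ Finset.range (2*n+2), (1 - ((X:(ZMod 7)⟦X⟧)^1)^(m+1)))^3
          * (∏ m ∈ Finset.range (2*n+2), (1 - ((X:(ZMod 7)⟦X⟧)^7)^(m+1)))^3)
      = PowerSeries.coeff n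
        ((∑ j ∈ Finset.range (2*n+2),
            ((((-1)^j * (2*(j:ℤ)+1)) : ℤ) : (ZMod 7)⟦X⟧) * ((X:(ZMod 7)⟦X⟧)^1)^(T j))
          * (∑ r ∈ Finset.range (2*n+2),
            ((((-1)^r * (2*(r:ℤ)+1)) : ℤ) : (ZMod 7)⟦X⟧) * ((X:(ZMod 7)⟦X⟧)^7)^(T r))) := by
    apply coeff_eq_of_dvd
    have key : ∀ a1 b1 a2 b2 : (ZMod 7)⟦X⟧, a1 * a2 - b1 * b2
        = (a1 - b1) * a2 + b1 * (a2 - b2) := by intros; ring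
    rw [key]
    exact dvd_add (j1.mul_right _) (j7.mul_left _)
  rw [step4]
  -- compute the coefficient of the product of the two sums
  rw [show ((X:(ZMod 7)⟦X⟧))^1 = (X:(ZMod 7)⟦X⟧) from pow_one _]
  have hterm : ∀ j r : ℕ,
      (((((-1)^j * (2*(j:ℤ)+1)) : ℤ) : (ZMod 7)⟦X⟧) * (X:(ZMod 7)⟦X⟧)^(T j))
        * (((((-1)^r * (2*(r:ℤ)+1)) : ℤ) : (ZMod 7)⟦X⟧) * ((X:(ZMod 7)⟦X⟧)^7)^(T r))
      = PowerSeries.C (R := ZMod 7) ((((-1)^j * (2*(j:ℤ)+1)) * ((-1)^r * (2*(r:ℤ)+1)) : ℤ) : ZMod 7)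
          * (X:(ZMod 7)⟦X⟧)^(T j + 7 * T r) := by
    intro j r
    have hcast : ((((-1)^j * (2*(j:ℤ)+1)) * ((-1)^r * (2*(r:ℤ)+1)) : ℤ) : ZMod 7)
        = ((((-1)^j * (2*(j:ℤ)+1)) : ℤ) : ZMod 7) * ((((-1)^r * (2*(r:ℤ)+1)) : ℤ) : ZMod 7) := by
      push_cast
      ring
    rw [hcast, map_mul, map_intCast, map_intCast, ← pow_mul, pow_add]
    ring
  rw [Finset.sum_mul_sum]
  rw [Finset.sum_congr rfl fun j _ => Finset.sum_congr rfl fun r _ => hterm j r]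
  rw [map_sum]
  rw [Finset.sum_congr rfl fun j (_ : j ∈ Finset.range (2*n+2)) => map_sum
    (PowerSeries.coeff n) _ (Finset.range (2*n+2))]
  have hcoe : ∀ j r : ℕ, PowerSeries.coeff n
      (PowerSeries.C (R := ZMod 7) ((((-1)^j * (2*(j:ℤ)+1)) * ((-1)^r * (2*(r:ℤ)+1)) : ℤ) : ZMod 7)
        * (X:(ZMod 7)⟦X⟧)^(T j + 7 * T r))
      = if n = T j + 7 * T r
          then ((((-1)^j * (2*(j:ℤ)+1)) * ((-1)^r * (2*(r:ℤ)+1)) : ℤ) : ZMod 7) else 0 := by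
    intro j r
    rw [PowerSeries.coeff_C_mul, PowerSeries.coeff_X_pow]
    split_ifs <;> simp
  rw [Finset.sum_congr rfl fun j _ => Finset.sum_congr rfl fun r _ => hcoe j r]
  -- now identify with the filtered sum
  rw [Int.cast_sum, Finset.sum_filter]
  have hsub : (Finset.range (n+1) ×ˢ Finset.range (n+1))
      ⊆ (Finset.range (2*n+2) ×ˢ Finset.range (2*n+2)) :=
    Finset.product_subset_product
      (Finset.range_subset_range.mpr (by omega)) (Finset.range_subset_range.mpr (by omega))
  have hiff : ∀ x1 x2 : ℕ, (2*n = x1*(x1+1) + 7*(x2*(x2+1))) ↔ (n = T x1 + 7 * T x2) := by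
    intro x1 x2
    have d1 := Tdouble x1
    have d2 := Tdouble x2
    omega
  have hval : ∀ x1 x2 : ℕ, (((-1:ℤ)^(x1+x2) * (2*x1+1) * (2*x2+1) : ℤ) : ZMod 7)
      = ((((-1)^x1 * (2*(x1:ℤ)+1)) * ((-1)^x2 * (2*(x2:ℤ)+1)) : ℤ) : ZMod 7) := by
    intro x1 x2
    push_cast
    ring
  have hcongr : ∑ x ∈ Finset.range (n+1) ×ˢ Finset.range (n+1),
          (if 2*n = x.1*(x.1+1) + 7*(x.2*(x.2+1))
            then (((-1:ℤ)^(x.1+x.2) * (2*(x.1:ℤ)+1) * (2*(x.2:ℤ)+1) : ℤ) : ZMod 7) else 0)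
        = ∑ x ∈ Finset.range (n+1) ×ˢ Finset.range (n+1),
          (if n = T x.1 + 7 * T x.2
            then ((((-1)^x.1 * (2*(x.1:ℤ)+1)) * ((-1)^x.2 * (2*(x.2:ℤ)+1)) : ℤ) : ZMod 7)
            else 0) :=
    Finset.sum_congr rfl (fun x _ => by rw [if_congr (hiff x.1 x.2) (hval x.1 x.2) rfl])
  rw [hcongr]
  rw [Finset.sum_subset hsub (fun x hx hnx => by
    rw [if_neg]
    intro hcond
    rw [Finset.mem_product, Finset.mem_range, Finset.mem_range] at hnx
    have t1 := T_ge x.1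
    have t2 := T_ge x.2
    omega)]
  rw [Finset.sum_product]

end Final
end
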